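/- arXiv:2401.05526 — 6 statements merged into one kernel-verified Lean document; each statement's English description precedes it below -/
import Mathlib

section
/- Let 1 ≤ p < ∞. There exists a constant C ≥ 1, depending only on p, such that: (a) for all real sequences y, z one has ‖y·z‖_{ℓ_p} ≤ C · ‖y‖_{τℓ_p} · ‖z‖_{g_p}; and (b) every real sequence x with ‖x‖_{ℓ_p} < ∞ can be written as a coordinatewise product x = y·z of two sequences with ‖y‖_{τℓ_p} · ‖z‖_{g_p} ≤ C · ‖x‖_{ℓ_p}. -/
open ENNReal

/-- The `ℓ_p` norm `‖x‖_{ℓ_p} = (∑_{n=1}^∞ |x_n|^p)^{1/p}` of a real sequence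
(indexed so that the entries of the sequence are `x 1, x 2, …`). -/
noncomputable def lpSeqNorm (p : ℝ) (x : ℕ → ℝ) : ℝ≥0∞ :=
  (∑' n : ℕ, ENNReal.ofReal |x (n + 1)| ^ p) ^ (1 / p)

/-- The Tandori norm `‖x‖_{τℓ_p} = (∑_{n=1}^∞ (sup_{k≥n} |x_k|)^p)^{1/p}`. -/
noncomputable def tlNorm (p : ℝ) (x : ℕ → ℝ) : ℝ≥0∞ :=
  (∑' n : ℕ, (⨆ (k : ℕ) (_ : n + 1 ≤ k), ENNReal.ofReal |x k|) ^ p) ^ (1 / p)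

/-- Bennett's norm `‖x‖_{g_q} = sup_{n≥1} ((1/n)∑_{k=1}^n |x_k|^q)^{1/q}`. -/
noncomputable def gNorm (q : ℝ) (x : ℕ → ℝ) : ℝ≥0∞ :=
  ⨆ n : ℕ, (((n : ℝ≥0∞) + 1)⁻¹ * ∑ k ∈ Finset.Icc 1 (n + 1), ENNReal.ofReal |x k| ^ q) ^ (1 / q)

lemma L2 {a a' d d' : ℝ≥0∞} (ha : a ≤ a') (hd : d ≤ d') :
    a' * d + a * d' ≤ a' * d' + a * d := by
  obtain ⟨e, rfl⟩ := exists_add_of_le ha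
  have h1 : e * d ≤ e * d' := mul_le_mul_right hd e
  calc (a + e) * d + a * d' = (a * d' + a * d) + e * d := by ring
    _ ≤ (a * d' + a * d) + e * d' := by gcongr
    _ = (a + e) * d' + a * d := by ring


lemma L1 (c b : ℕ → ℝ≥0∞) (M : ℝ≥0∞) (hc : Antitone c)
    (hb : ∀ n : ℕ, ∑ k ∈ Finset.range n, b k ≤ n * M) :
    ∑' n, c n * b n ≤ M * ∑' n, c n := by
  rcases eq_or_ne M 0 with rfl | hM0
  · have hb0 : ∀ n, b n = 0 := by
      intro n
      have := hb (n+1)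
      simp only [Nat.cast_ofNat, mul_zero, le_zero_iff] at this
      have := Finset.sum_eq_zero_iff.mp this
      exact this n (Finset.self_mem_range_succ n)
    simp [hb0]
  rcases eq_or_ne (∑' n, c n) 0 with hc0 | hcne
  · have : ∀ n, c n = 0 := fun n => by
      have := ENNReal.tsum_eq_zero.mp hc0
      exact this n
    simp [this]
  rcases eq_or_ne M ∞ with rfl | hMtop
  · rw [ENNReal.top_mul hcne]; exact le_top
  rcases eq_or_ne (∑' n, c n) ∞ with hctop | hctop
  · rw [hctop, ENNReal.mul_top hM0]; exact le_top
  -- main case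
  have hcfin : ∀ n, c n ≠ ∞ := fun n => ne_top_of_le_ne_top hctop (ENNReal.le_tsum n)
  have key : ∀ N : ℕ, (∑ n ∈ Finset.range N, c n * b n) + c N * (N * M)
      ≤ M * (∑ n ∈ Finset.range N, c n) + c N * (∑ k ∈ Finset.range N, b k) := by
    intro N
    induction N with
    | zero => simp
    | succ N ih =>
      have step : c N * (∑ k ∈ Finset.range (N+1), b k) + c (N+1) * ((N+1 : ℕ) * M)
          ≤ c N * ((N+1 : ℕ) * M) + c (N+1) * (∑ k ∈ Finset.range (N+1), b k) :=
        L2 (hc (Nat.le_succ N)) (hb (N+1))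
      have h3 : (∑ n ∈ Finset.range (N+1), c n * b n) + c (N+1) * ((N+1 : ℕ) * M) + c N * (N * M)
          ≤ M * (∑ n ∈ Finset.range (N+1), c n) + c (N+1) * (∑ k ∈ Finset.range (N+1), b k) + c N * (N * M) := by
        calc (∑ n ∈ Finset.range (N+1), c n * b n) + c (N+1) * ((N+1 : ℕ) * M) + c N * (N * M)
            = ((∑ n ∈ Finset.range N, c n * b n) + c N * (N * M)) + (c N * b N + c (N+1) * ((N+1:ℕ) * M)) := by
              rw [Finset.sum_range_succ]; ring
          _ ≤ (M * (∑ n ∈ Finset.range N, c n) + c N * (∑ k ∈ Finset.range N, b k)) + (c N * b N + c (N+1) * ((N+1:ℕ) * M)) := by gcongr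
          _ = M * (∑ n ∈ Finset.range N, c n) + (c N * (∑ k ∈ Finset.range (N+1), b k) + c (N+1) * ((N+1:ℕ)*M)) := by
              rw [Finset.sum_range_succ (f := b)]; ring
          _ ≤ M * (∑ n ∈ Finset.range N, c n) + (c N * ((N+1:ℕ)*M) + c (N+1) * (∑ k ∈ Finset.range (N+1), b k)) := by gcongr
          _ = M * (∑ n ∈ Finset.range (N+1), c n) + c (N+1) * (∑ k ∈ Finset.range (N+1), b k) + c N * (N * M) := by
              rw [Finset.sum_range_succ (f := c)]; push_cast; ring
      have hfin : c N * (N * M) ≠ ∞ := by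
        exact ENNReal.mul_ne_top (hcfin N) (ENNReal.mul_ne_top (by simp) hMtop)
      exact (ENNReal.add_le_add_iff_right hfin).mp h3
  have key2 : ∀ N : ℕ, (∑ n ∈ Finset.range N, c n * b n) ≤ M * ∑' n, c n := by
    intro N
    have h1 := key N
    have h2 : c N * (∑ k ∈ Finset.range N, b k) ≤ c N * (N * M) := mul_le_mul_right (hb N) _
    have hfin : c N * (N * M) ≠ ∞ :=
      ENNReal.mul_ne_top (hcfin N) (ENNReal.mul_ne_top (by simp) hMtop)
    have h4 : (∑ n ∈ Finset.range N, c n * b n) + c N * (N * M)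
        ≤ M * (∑ n ∈ Finset.range N, c n) + c N * (N * M) := h1.trans (by gcongr)
    have h5 := (ENNReal.add_le_add_iff_right hfin).mp h4
    exact h5.trans (mul_le_mul_right (ENNReal.sum_le_tsum _) M)
  rw [ENNReal.tsum_eq_iSup_nat]
  exact iSup_le key2

lemma sum_Icc_shift (f : ℕ → ℝ≥0∞) (n : ℕ) :
    ∑ k ∈ Finset.Icc 1 (n+1), f k = ∑ k ∈ Finset.range (n+1), f (k+1) := by
  have : Finset.Icc 1 (n+1) = Finset.Ico 1 (n+2) := by
    ext k; simp [Nat.lt_succ_iff]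
  rw [this, Finset.sum_Ico_eq_sum_range]
  simp [add_comm]


lemma gNorm_prefix (p : ℝ) (hp0 : 0 < p) (z : ℕ → ℝ) (m : ℕ) :
    ∑ k ∈ Finset.Icc 1 (m+1), ENNReal.ofReal |z k| ^ p ≤ ((m:ℝ≥0∞)+1) * (gNorm p z) ^ p := by
  set S := ∑ k ∈ Finset.Icc 1 (m+1), ENNReal.ofReal |z k| ^ p with hS
  have h1 : (((m : ℝ≥0∞) + 1)⁻¹ * S) ^ (1/p) ≤ gNorm p z := le_iSup (fun n : ℕ => (((n : ℝ≥0∞) + 1)⁻¹ * ∑ k ∈ Finset.Icc 1 (n + 1), ENNReal.ofReal |z k| ^ p) ^ (1 / p)) m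
  have h2 := ENNReal.rpow_le_rpow h1 hp0.le
  rw [← ENNReal.rpow_mul, one_div_mul_cancel hp0.ne', ENNReal.rpow_one] at h2
  have hm0 : ((m:ℝ≥0∞)+1) ≠ 0 := by simp
  have hmt : ((m:ℝ≥0∞)+1) ≠ ∞ := by simp
  calc S = ((m:ℝ≥0∞)+1) * (((m:ℝ≥0∞)+1)⁻¹ * S) := by
        rw [← mul_assoc, ENNReal.mul_inv_cancel hm0 hmt, one_mul]
    _ ≤ ((m:ℝ≥0∞)+1) * (gNorm p z) ^ p := mul_le_mul_right h2 _


lemma rpow_p_recover (X : ℝ≥0∞) (p : ℝ) (hp0 : p ≠ 0) : (X ^ p) ^ (1/p) = X := by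
  rw [← ENNReal.rpow_mul, mul_one_div_cancel hp0, ENNReal.rpow_one]


lemma H1 (a : ℕ → ℝ≥0∞) (s : Finset ℕ) (hs : ∀ k ∈ s, 1 ≤ k) :
    ∑ k ∈ s, a k ≤ ∑' n, a (n + 1) := by
  have hinj : ∀ x ∈ s, ∀ y ∈ s, x - 1 = y - 1 → x = y := by
    intro x hx y hy h
    have := hs x hx; have := hs y hy; omega
  have heq : ∑ k ∈ s, a k = ∑ j ∈ s.image (· - 1), a (j + 1) := by
    rw [Finset.sum_image (g := fun x => x - 1) (f := fun j => a (j + 1)) hinj]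
    apply Finset.sum_congr rfl
    intro k hk
    have := hs k hk
    congr 1; omega
  rw [heq]
  exact ENNReal.sum_le_tsum _


lemma H2 (f : ℕ → ℝ≥0∞) (L : ℕ) :
    ∑ l ∈ Finset.range L, ∑ k ∈ Finset.Ico (2^l) (2^(l+1)), f k
      = ∑ k ∈ Finset.Ico 1 (2^L), f k := by
  induction L with
  | zero => simp
  | succ L ih =>
    rw [Finset.sum_range_succ, ih,
      Finset.sum_Ico_consecutive f (Nat.one_le_two_pow) (by
        exact Nat.pow_le_pow_right (by norm_num) (Nat.le_succ L))]


lemma H3 (L : ℕ) : ∑ m ∈ Finset.range L, (2:ℝ≥0∞)^m ≤ 2^L := by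
  induction L with
  | zero => simp
  | succ L ih =>
    rw [Finset.sum_range_succ, pow_succ]
    calc ∑ m ∈ Finset.range L, (2:ℝ≥0∞)^m + 2^L ≤ 2^L + 2^L := add_le_add ih le_rfl
      _ = 2^L * 2 := by ring


lemma rpow_recover2 (X : ℝ≥0∞) (p : ℝ) (hp0 : p ≠ 0) : (X ^ (1/p)) ^ p = X := by
  rw [← ENNReal.rpow_mul, one_div_mul_cancel hp0, ENNReal.rpow_one]


lemma parta (p : ℝ) (hp : 1 ≤ p) (y z : ℕ → ℝ) :
    lpSeqNorm p (fun n => y n * z n) ≤ tlNorm p y * gNorm p z := by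
  have hp0 : (0:ℝ) < p := lt_of_lt_of_le one_pos hp
  have hpne : p ≠ 0 := ne_of_gt hp0
  set c : ℕ → ℝ≥0∞ := fun n => (⨆ (k : ℕ) (_ : n + 1 ≤ k), ENNReal.ofReal |y k|) ^ p with hc
  set b : ℕ → ℝ≥0∞ := fun n => ENNReal.ofReal |z (n+1)| ^ p with hb
  have hcanti : Antitone c := by
    intro n n' hnn'
    apply ENNReal.rpow_le_rpow _ hp0.le
    exact iSup₂_le fun k hk => le_iSup₂ (f := fun (k:ℕ) (_ : n+1 ≤ k) => ENNReal.ofReal |y k|) k (by omega)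
  set M : ℝ≥0∞ := (gNorm p z) ^ p with hM
  have hbnd : ∀ n : ℕ, ∑ k ∈ Finset.range n, b k ≤ n * M := by
    intro n
    cases n with
    | zero => simp
    | succ m =>
      have := gNorm_prefix p hp0 z m
      rw [sum_Icc_shift] at this
      convert this using 2 <;> push_cast <;> ring_nf
  have hterm : ∀ n : ℕ, ENNReal.ofReal |y (n+1) * z (n+1)| ^ p ≤ c n * b n := by
    intro n
    have h1 : ENNReal.ofReal |y (n+1) * z (n+1)| = ENNReal.ofReal |y (n+1)| * ENNReal.ofReal |z (n+1)| := by
      rw [abs_mul, ENNReal.ofReal_mul (abs_nonneg _)]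
    have h2 : ENNReal.ofReal |y (n+1)| ≤ ⨆ (k : ℕ) (_ : n + 1 ≤ k), ENNReal.ofReal |y k| :=
      le_iSup₂ (f := fun (k:ℕ) (_ : n+1 ≤ k) => ENNReal.ofReal |y k|) (n+1) le_rfl
    calc ENNReal.ofReal |y (n+1) * z (n+1)| ^ p
        ≤ ((⨆ (k : ℕ) (_ : n + 1 ≤ k), ENNReal.ofReal |y k|) * ENNReal.ofReal |z (n+1)|) ^ p := by
          apply ENNReal.rpow_le_rpow _ hp0.le
          rw [h1]; exact mul_le_mul_left h2 _
      _ = c n * b n := ENNReal.mul_rpow_of_nonneg _ _ hp0.le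
  have hsum : (∑' n, ENNReal.ofReal |y (n+1) * z (n+1)| ^ p) ≤ M * ∑' n, c n :=
    le_trans (ENNReal.tsum_le_tsum hterm) (L1 c b M hcanti hbnd)
  have : lpSeqNorm p (fun n => y n * z n) ≤ (M * ∑' n, c n) ^ (1/p) :=
    ENNReal.rpow_le_rpow hsum (by positivity)
  refine this.trans ?_
  rw [ENNReal.mul_rpow_of_nonneg _ _ (by positivity : (0:ℝ) ≤ 1/p), hM,
    rpow_p_recover _ p hpne]
  rw [tlNorm, mul_comm]

lemma partb (p : ℝ) (hp : 1 ≤ p) (x : ℕ → ℝ) (hx : lpSeqNorm p x < ⊤) :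
    ∃ y z : ℕ → ℝ, (∀ n, x n = y n * z n) ∧
      tlNorm p y * gNorm p z ≤ ENNReal.ofReal 8 * lpSeqNorm p x := by
  classical
  have hp0 : (0:ℝ) < p := lt_of_lt_of_le one_pos hp
  set a : ℕ → ℝ≥0∞ := fun k => ENNReal.ofReal |x k| ^ p with ha
  set T : ℝ≥0∞ := ∑' n, a (n+1) with hT
  have hlp : lpSeqNorm p x = T ^ (1/p) := rfl
  have hTne : T ≠ ∞ := by
    have h1 : (lpSeqNorm p x) ^ p ≠ ∞ := ENNReal.rpow_ne_top_of_nonneg hp0.le hx.ne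
    rwa [hlp, rpow_recover2 _ p hp0.ne'] at h1
  set B : ℕ → ℝ≥0∞ := fun m => ∑ k ∈ Finset.Ico (2^m) (2^(m+1)), a k with hB
  set v : ℕ → ℝ≥0∞ := fun m => ⨆ l, ⨆ (_ : m ≤ l), B l / 2^l with hv
  set u : ℕ → ℝ≥0∞ := fun k => v (Nat.log 2 k) with hu
  have hBleT : ∀ l, B l ≤ T := by
    intro l
    simp only [hB, hT]
    apply H1
    intro k hk
    simp only [Finset.mem_Ico] at hk
    have h2 : 1 ≤ 2^l := Nat.one_le_two_pow
    omega
  have hvleT : ∀ m, v m ≤ T := by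
    intro m
    simp only [hv]
    apply iSup₂_le; intro l _
    calc B l / 2^l ≤ B l / 1 := ENNReal.div_le_div_left (by exact one_le_pow_of_one_le' (by norm_num : (1:ℝ≥0∞) ≤ 2) l) _
      _ = B l := by rw [div_one]
      _ ≤ T := hBleT l
  have hvanti : Antitone v := by
    intro m m' h
    simp only [hv]
    apply iSup₂_le; intro l hl
    exact le_iSup₂ (f := fun l (_ : m ≤ l) => B l / 2^l) l (le_trans h hl)
  have huanti : Antitone u := fun k k' h => hvanti (Nat.log_mono_right h)
  have hufin : ∀ k, u k ≠ ∞ := fun k => ((hvleT _).trans_lt hTne.lt_top).ne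
  have hBm_le_v : ∀ m, B m / 2^m ≤ v m := fun m =>
    le_iSup₂ (f := fun l (_ : m ≤ l) => B l / 2^l) m le_rfl
  have hu0 : ∀ k, 1 ≤ k → u k = 0 → x k = 0 := by
    intro k hk h0
    have h1 : B (Nat.log 2 k) / 2^(Nat.log 2 k) = 0 :=
      le_antisymm (h0 ▸ hBm_le_v (Nat.log 2 k)) (by positivity)
    have h2 : B (Nat.log 2 k) = 0 := by
      rcases ENNReal.div_eq_zero_iff.mp h1 with h | h
      · exact h
      · exact absurd h (ENNReal.pow_ne_top (by norm_num))
    have hmem : k ∈ Finset.Ico (2^(Nat.log 2 k)) (2^(Nat.log 2 k + 1)) := by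
      simp only [Finset.mem_Ico]
      exact ⟨Nat.pow_log_le_self 2 (by omega), Nat.lt_pow_succ_log_self (by norm_num) k⟩
    have h3 : a k = 0 := by
      simp only [hB] at h2
      exact (Finset.sum_eq_zero_iff.mp h2) k hmem
    simp only [ha] at h3
    have h4 : ENNReal.ofReal |x k| = 0 := by
      rcases ENNReal.rpow_eq_zero_iff.mp h3 with ⟨h, _⟩ | ⟨_, hneg⟩
      · exact h
      · linarith
    have h5 := ENNReal.ofReal_eq_zero.mp h4
    exact abs_eq_zero.mp (le_antisymm h5 (abs_nonneg _))
  -- sum of u bound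
  have husum : ∑' n, u (n+1) ≤ 2 * T := by
    set F : ℕ → ℕ → ℝ≥0∞ := fun n l => if Nat.log 2 (n+1) ≤ l then B l / 2^l else 0 with hF
    have hstep : ∀ n, u (n+1) ≤ ∑' l, F n l := by
      intro n
      simp only [hu, hv]
      apply iSup₂_le; intro l hl
      have heq : F n l = B l / 2^l := by simp only [hF]; rw [if_pos hl]
      rw [← heq]
      exact ENNReal.le_tsum l
    have hinner : ∀ l, (∑' n, F n l) ≤ 2 * B l := by
      intro l
      have hsupp : ∀ n ∉ Finset.range (2^(l+1) - 1), F n l = 0 := by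
        intro n hn
        simp only [Finset.mem_range] at hn
        have h1 : 2^(l+1) ≤ n + 1 := by have := Nat.one_le_two_pow (n := l+1); omega
        have h2 : l + 1 ≤ Nat.log 2 (n+1) := (Nat.le_log_iff_pow_le one_lt_two (by omega)).mpr h1
        simp only [hF]
        rw [if_neg (by omega)]
      rw [tsum_eq_sum hsupp]
      have hval : ∀ n ∈ Finset.range (2^(l+1) - 1), F n l = B l / 2^l := by
        intro n hn
        simp only [Finset.mem_range] at hn
        have h1 : n + 1 < 2^(l+1) := by omega
        have h2 : Nat.log 2 (n+1) ≤ l := by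
          have h3 := (Nat.log_lt_iff_lt_pow one_lt_two (by omega : n + 1 ≠ 0)).mpr h1
          omega
        simp only [hF]
        rw [if_pos h2]
      rw [Finset.sum_congr rfl hval, Finset.sum_const, Finset.card_range, nsmul_eq_mul]
      have hcard : ((2^(l+1) - 1 : ℕ) : ℝ≥0∞) ≤ (2:ℝ≥0∞)^(l+1) := by
        calc ((2^(l+1) - 1 : ℕ) : ℝ≥0∞) ≤ ((2^(l+1) : ℕ) : ℝ≥0∞) := Nat.cast_le.mpr (Nat.sub_le _ _)
          _ = (2:ℝ≥0∞)^(l+1) := by push_cast; ring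
      calc ((2^(l+1) - 1 : ℕ) : ℝ≥0∞) * (B l / 2^l) ≤ (2:ℝ≥0∞)^(l+1) * (B l / 2^l) :=
            mul_le_mul_left hcard _
        _ = 2 * B l := by
            have hc : (2:ℝ≥0∞)^l * ((2:ℝ≥0∞)^l)⁻¹ = 1 :=
              ENNReal.mul_inv_cancel (pow_ne_zero _ (by norm_num)) (ENNReal.pow_ne_top (by norm_num))
            rw [pow_succ, div_eq_mul_inv]
            calc (2:ℝ≥0∞)^l * 2 * (B l * ((2:ℝ≥0∞)^l)⁻¹) = 2 * B l * ((2:ℝ≥0∞)^l * ((2:ℝ≥0∞)^l)⁻¹) := by ring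
              _ = 2 * B l := by rw [hc, mul_one]
    have hBsum : (∑' l, B l) ≤ T := by
      rw [ENNReal.tsum_eq_iSup_nat]
      apply iSup_le; intro L
      simp only [hB, hT]
      rw [H2]
      apply H1
      intro k hk
      simp only [Finset.mem_Ico] at hk
      omega
    calc ∑' n, u (n+1) ≤ ∑' n, ∑' l, F n l := ENNReal.tsum_le_tsum hstep
      _ = ∑' l, ∑' n, F n l := ENNReal.tsum_comm
      _ ≤ ∑' l, 2 * B l := ENNReal.tsum_le_tsum hinner
      _ = 2 * ∑' l, B l := ENNReal.tsum_mul_left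
      _ ≤ 2 * T := mul_le_mul_right hBsum 2
  -- ratio bound
  have hratio : ∀ n : ℕ, ∑ k ∈ Finset.Icc 1 (n+1), a k / u k ≤ 2 * ((n:ℝ≥0∞)+1) := by
    intro n
    have hsub : Finset.Icc 1 (n+1) ⊆ Finset.Ico 1 (2^(Nat.log 2 (n+1)+1)) := by
      intro k hk
      simp only [Finset.mem_Icc, Finset.mem_Ico] at hk ⊢
      exact ⟨hk.1, lt_of_le_of_lt hk.2 (Nat.lt_pow_succ_log_self (by norm_num) (n+1))⟩
    have hblock : ∀ m, ∑ k ∈ Finset.Ico (2^m) (2^(m+1)), a k / u k ≤ (2:ℝ≥0∞)^m := by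
      intro m
      have hterm : ∀ k ∈ Finset.Ico (2^m) (2^(m+1)), a k / u k ≤ a k * ((2:ℝ≥0∞)^m / B m) := by
        intro k hk
        simp only [Finset.mem_Ico] at hk
        have hlog : u k = v m := by
          simp only [hu]
          rw [Nat.log_eq_of_pow_le_of_lt_pow hk.1 hk.2]
        rw [hlog]
        calc a k / v m ≤ a k / (B m / 2^m) := ENNReal.div_le_div_left (hBm_le_v m) _
          _ = a k * ((2:ℝ≥0∞)^m / B m) := by
              rw [div_eq_mul_inv, ENNReal.inv_div
                (Or.inl (ENNReal.pow_ne_top (by norm_num))) (Or.inl (pow_ne_zero _ (by norm_num)))]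
      calc ∑ k ∈ Finset.Ico (2^m) (2^(m+1)), a k / u k
          ≤ ∑ k ∈ Finset.Ico (2^m) (2^(m+1)), a k * ((2:ℝ≥0∞)^m / B m) := Finset.sum_le_sum hterm
        _ = B m * ((2:ℝ≥0∞)^m / B m) := by rw [← Finset.sum_mul]
        _ = (2:ℝ≥0∞)^m * (B m / B m) := by rw [div_eq_mul_inv, div_eq_mul_inv]; ring
        _ ≤ (2:ℝ≥0∞)^m * 1 := mul_le_mul_right ENNReal.div_self_le_one _
        _ = (2:ℝ≥0∞)^m := mul_one _
    calc ∑ k ∈ Finset.Icc 1 (n+1), a k / u k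
        ≤ ∑ k ∈ Finset.Ico 1 (2^(Nat.log 2 (n+1)+1)), a k / u k :=
          Finset.sum_le_sum_of_subset hsub
      _ = ∑ m ∈ Finset.range (Nat.log 2 (n+1)+1), ∑ k ∈ Finset.Ico (2^m) (2^(m+1)), a k / u k :=
          (H2 _ _).symm
      _ ≤ ∑ m ∈ Finset.range (Nat.log 2 (n+1)+1), (2:ℝ≥0∞)^m :=
          Finset.sum_le_sum (fun m _ => hblock m)
      _ ≤ 2^(Nat.log 2 (n+1)+1) := H3 _
      _ = 2 * 2^(Nat.log 2 (n+1)) := by rw [pow_succ]; ring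
      _ ≤ 2 * ((n:ℝ≥0∞)+1) := by
          apply mul_le_mul_right
          have h1 : (2:ℕ)^(Nat.log 2 (n+1)) ≤ n+1 := Nat.pow_log_le_self 2 (Nat.succ_ne_zero n)
          have h2 := Nat.cast_le (α := ℝ≥0∞).mpr h1
          push_cast at h2
          exact h2
  -- define y and z
  set y : ℕ → ℝ := fun k => if k = 0 then x 0 else ((u k).toReal) ^ (1/p) with hy
  set z : ℕ → ℝ := fun k => if k = 0 then 1 else if u k = 0 then 0 else x k / y k with hz
  have hy_nonneg : ∀ k, 1 ≤ k → 0 ≤ y k := by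
    intro k hk
    simp only [hy]
    rw [if_neg (by omega)]
    exact Real.rpow_nonneg ENNReal.toReal_nonneg _
  have hy_eq : ∀ k, 1 ≤ k → ENNReal.ofReal (y k) ^ p = u k := by
    intro k hk
    simp only [hy]
    rw [if_neg (by omega),
      ← ENNReal.ofReal_rpow_of_nonneg ENNReal.toReal_nonneg (by positivity : (0:ℝ) ≤ 1/p),
      ENNReal.ofReal_toReal (hufin k)]
    exact rpow_recover2 _ p hp0.ne'
  have hy_pos : ∀ k, 1 ≤ k → u k ≠ 0 → 0 < y k := by
    intro k hk h0
    simp only [hy]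
    rw [if_neg (by omega)]
    exact Real.rpow_pos_of_pos (ENNReal.toReal_pos h0 (hufin k)) _
  have hfact : ∀ n, x n = y n * z n := by
    intro n
    cases n with
    | zero => simp [hy, hz]
    | succ k =>
      simp only [hz]
      rw [if_neg (Nat.succ_ne_zero k)]
      by_cases h0 : u (k+1) = 0
      · rw [if_pos h0, mul_zero]
        exact hu0 (k+1) (by omega) h0
      · rw [if_neg h0, mul_comm, div_mul_cancel₀ _ (ne_of_gt (hy_pos (k+1) (by omega) h0))]
  have htl : tlNorm p y = (∑' n, u (n+1)) ^ (1/p) := by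
    rw [tlNorm]
    congr 1
    apply tsum_congr; intro n
    have hsup : (⨆ (k : ℕ) (_ : n + 1 ≤ k), ENNReal.ofReal |y k|) = ENNReal.ofReal (y (n+1)) := by
      apply le_antisymm
      · apply iSup₂_le; intro k hk
        apply ENNReal.ofReal_le_ofReal
        rw [abs_of_nonneg (hy_nonneg k (by omega))]
        simp only [hy]
        rw [if_neg (by omega), if_neg (by omega)]
        exact Real.rpow_le_rpow ENNReal.toReal_nonneg
          (ENNReal.toReal_mono (hufin (n+1)) (huanti hk)) (by positivity)
      · have h := le_iSup₂ (f := fun (k:ℕ) (_ : n+1 ≤ k) => ENNReal.ofReal |y k|) (n+1) le_rfl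
        rwa [abs_of_nonneg (hy_nonneg (n+1) (by omega))] at h
    rw [hsup, hy_eq (n+1) (by omega)]
  have htlle : tlNorm p y ≤ (2*T) ^ (1/p) := by
    rw [htl]; exact ENNReal.rpow_le_rpow husum (by positivity)
  have hzterm : ∀ k, 1 ≤ k → ENNReal.ofReal |z k| ^ p ≤ a k / u k := by
    intro k hk
    simp only [hz]
    rw [if_neg (by omega)]
    by_cases h0 : u k = 0
    · rw [if_pos h0]
      simp only [abs_zero, ENNReal.ofReal_zero]
      rw [ENNReal.zero_rpow_of_pos hp0]
      positivity
    · rw [if_neg h0]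
      have hyp := hy_pos k hk h0
      rw [abs_div, abs_of_pos hyp, ENNReal.ofReal_div_of_pos hyp,
        ENNReal.div_rpow_of_nonneg _ _ hp0.le, hy_eq k hk]
  have hg : gNorm p z ≤ (2:ℝ≥0∞) ^ (1/p) := by
    rw [gNorm]
    apply iSup_le; intro n
    apply ENNReal.rpow_le_rpow _ (by positivity)
    calc ((n : ℝ≥0∞) + 1)⁻¹ * ∑ k ∈ Finset.Icc 1 (n + 1), ENNReal.ofReal |z k| ^ p
        ≤ ((n : ℝ≥0∞) + 1)⁻¹ * ∑ k ∈ Finset.Icc 1 (n+1), a k / u k := by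
          apply mul_le_mul_right
          apply Finset.sum_le_sum
          intro k hk
          simp only [Finset.mem_Icc] at hk
          exact hzterm k hk.1
      _ ≤ ((n : ℝ≥0∞) + 1)⁻¹ * (2 * ((n:ℝ≥0∞)+1)) := mul_le_mul_right (hratio n) _
      _ = 2 := by
          rw [mul_comm (2:ℝ≥0∞), ← mul_assoc, ENNReal.inv_mul_cancel (by simp) (by simp), one_mul]
  refine ⟨y, z, hfact, ?_⟩
  calc tlNorm p y * gNorm p z ≤ (2*T)^(1/p) * (2:ℝ≥0∞)^(1/p) := mul_le_mul' htlle hg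
    _ = (2*T*2)^(1/p) := (ENNReal.mul_rpow_of_nonneg _ _ (by positivity)).symm
    _ = (4*T)^(1/p) := by ring_nf
    _ = (4:ℝ≥0∞)^(1/p) * T^(1/p) := ENNReal.mul_rpow_of_nonneg _ _ (by positivity)
    _ ≤ 4 * T^(1/p) := by
        apply mul_le_mul_left
        have h1 : (4:ℝ≥0∞)^(1/p) ≤ (4:ℝ≥0∞)^(1:ℝ) :=
          ENNReal.rpow_le_rpow_of_exponent_le (by norm_num) (by rw [div_le_one hp0]; exact hp)
        rwa [ENNReal.rpow_one] at h1
    _ ≤ ENNReal.ofReal 8 * lpSeqNorm p x := by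
        rw [hlp]
        apply mul_le_mul_left
        rw [ENNReal.ofReal_ofNat]
        norm_num

/-- The factorization `ℓ_p = τℓ_p ⊙ g_p` (Bennett; Astashkin–Maligranda). -/
theorem stmt_12 (p : ℝ) (hp : 1 ≤ p) :
    ∃ C : ℝ, 1 ≤ C ∧
      (∀ y z : ℕ → ℝ,
        lpSeqNorm p (fun n => y n * z n) ≤ ENNReal.ofReal C * (tlNorm p y * gNorm p z)) ∧
      (∀ x : ℕ → ℝ, lpSeqNorm p x < ⊤ →
        ∃ y z : ℕ → ℝ, (∀ n, x n = y n * z n) ∧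
          tlNorm p y * gNorm p z ≤ ENNReal.ofReal C * lpSeqNorm p x) := by
  refine ⟨8, by norm_num, ?_, fun x hx => partb p hp x hx⟩
  intro y z
  calc lpSeqNorm p (fun n => y n * z n) ≤ tlNorm p y * gNorm p z := parta p hp y z
    _ = 1 * (tlNorm p y * gNorm p z) := (one_mul _).symm
    _ ≤ ENNReal.ofReal 8 * (tlNorm p y * gNorm p z) := by
        apply mul_le_mul_left
        rw [ENNReal.ofReal_ofNat]
        exact le_of_lt (by norm_num)
end

section
/- Let 1 ≤ p < ∞. There exists a constant C ≥ 1, depending only on p, such that: (a) for all Lebesgue-measurable g, h : (0,∞) → ℝ one has ‖g·h‖_{L_p} ≤ C · ‖g‖_{τL_p} · ‖h‖_{G_p}; and (b) every Lebesgue-measurable f : (0,∞) → ℝ with ‖f‖_{L_p} < ∞ can be written as f = g·h almost everywhere, with g, h Lebesgue-measurable and ‖g‖_{τL_p} · ‖h‖_{G_p} ≤ C · ‖f‖_{L_p}. -/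
set_option maxHeartbeats 1000000

open ENNReal MeasureTheory


/-- The `L_p(0,∞)` norm `‖f‖_{L_p} = (∫_0^∞ |f(t)|^p dt)^{1/p}`. -/
noncomputable def LpNorm (p : ℝ) (f : ℝ → ℝ) : ℝ≥0∞ :=
  (∫⁻ t in Set.Ioi (0 : ℝ), ENNReal.ofReal |f t| ^ p) ^ (1 / p)

/-- The Tandori norm `‖f‖_{τL_p} = (∫_0^∞ (esssup_{t≥x} |f(t)|)^p dx)^{1/p}`. -/
noncomputable def TLNorm (p : ℝ) (f : ℝ → ℝ) : ℝ≥0∞ :=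
  (∫⁻ x in Set.Ioi (0 : ℝ),
      (essSup (fun t => ENNReal.ofReal |f t|) (volume.restrict (Set.Ici x))) ^ p) ^ (1 / p)

/-- The norm `‖f‖_{G_q} = sup_{x>0} ((1/x)∫_0^x |f(t)|^q dt)^{1/q}`. -/
noncomputable def GNorm (q : ℝ) (f : ℝ → ℝ) : ℝ≥0∞ :=
  ⨆ (x : ℝ) (_ : 0 < x),
    ((ENNReal.ofReal x)⁻¹ * ∫⁻ t in Set.Ioc (0 : ℝ) x, ENNReal.ofReal |f t| ^ q) ^ (1 / q)


section Aux
open Set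


lemma key_layer (a : ℝ≥0∞) : volume {y : ℝ | 0 < y ∧ ENNReal.ofReal y < a} = a := by
  rcases eq_or_ne a ⊤ with rfl | ha
  · have h : {y : ℝ | 0 < y ∧ ENNReal.ofReal y < ⊤} = Ioi 0 := by
      ext y; simp [ofReal_lt_top]
    rw [h, Real.volume_Ioi]
  · have h : {y : ℝ | 0 < y ∧ ENNReal.ofReal y < a} = Ioo 0 a.toReal := by
      ext y
      simp only [mem_setOf_eq, mem_Ioo]
      exact and_congr_right fun hy => ENNReal.ofReal_lt_iff_lt_toReal hy.le ha
    rw [h, Real.volume_Ioo, sub_zero, ENNReal.ofReal_toReal ha]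

lemma double_int (u H : ℝ → ℝ≥0∞) (hu : Measurable u) (hH : Measurable H) :
    ∫⁻ t in Ioi (0:ℝ), u t * H t =
      ∫⁻ y in Ioi (0:ℝ), ∫⁻ t in Ioi (0:ℝ), (if ENNReal.ofReal y < u t then H t else 0) := by
  have meas : Measurable (Function.uncurry fun t y =>
      (if ENNReal.ofReal y < u t then H t else 0 : ℝ≥0∞)) := by
    have hset : MeasurableSet {p : ℝ × ℝ | ENNReal.ofReal p.2 < u p.1} :=
      measurableSet_lt (ENNReal.measurable_ofReal.comp measurable_snd) (hu.comp measurable_fst)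
    exact Measurable.ite hset (hH.comp measurable_fst) measurable_const
  have step1 : ∀ t : ℝ, u t * H t
      = ∫⁻ y in Ioi (0:ℝ), (if ENNReal.ofReal y < u t then H t else 0) := by
    intro t
    have hset : MeasurableSet {y : ℝ | ENNReal.ofReal y < u t} :=
      measurableSet_lt ENNReal.measurable_ofReal measurable_const
    have hind : ∀ y : ℝ, (if ENNReal.ofReal y < u t then H t else 0)
        = ({y : ℝ | ENNReal.ofReal y < u t}).indicator (fun _ => H t) y := by
      intro y; simp [Set.indicator_apply, mem_setOf_eq]
    simp_rw [hind]
    rw [lintegral_indicator_const hset, Measure.restrict_apply hset]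
    have hsets : {y : ℝ | ENNReal.ofReal y < u t} ∩ Ioi 0
        = {y : ℝ | 0 < y ∧ ENNReal.ofReal y < u t} := by
      ext y; simp [and_comm, mem_Ioi]
    rw [hsets, key_layer, mul_comm]
  calc ∫⁻ t in Ioi (0:ℝ), u t * H t
      = ∫⁻ t in Ioi (0:ℝ), ∫⁻ y in Ioi (0:ℝ),
          (if ENNReal.ofReal y < u t then H t else 0) := by
        exact lintegral_congr fun t => step1 t
    _ = ∫⁻ y in Ioi (0:ℝ), ∫⁻ t in Ioi (0:ℝ),
          (if ENNReal.ofReal y < u t then H t else 0) := by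
        exact lintegral_lintegral_swap meas.aemeasurable


lemma inner_eq (u H : ℝ → ℝ≥0∞) (hu : Measurable u) (y : ℝ) :
    ∫⁻ t in Ioi (0:ℝ), (if ENNReal.ofReal y < u t then H t else 0)
      = ∫⁻ t in {t : ℝ | 0 < t ∧ ENNReal.ofReal y < u t}, H t := by
  have hset : MeasurableSet {t : ℝ | ENNReal.ofReal y < u t} := hu measurableSet_Ioi
  have hind : ∀ t : ℝ, (if ENNReal.ofReal y < u t then H t else 0)
      = ({t : ℝ | ENNReal.ofReal y < u t}).indicator H t := by
    intro t; simp [Set.indicator_apply, mem_setOf_eq]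
  simp_rw [hind]
  rw [lintegral_indicator hset, Measure.restrict_restrict hset]
  have hseteq : {t : ℝ | ENNReal.ofReal y < u t} ∩ Ioi 0
      = {t : ℝ | 0 < t ∧ ENNReal.ofReal y < u t} := by
    ext t; simp only [mem_inter_iff, mem_setOf_eq, mem_Ioi]; tauto
  rw [hseteq]

lemma antitone_bound (u H : ℝ → ℝ≥0∞) (hu : Measurable u) (hH : Measurable H)
    (hanti : ∀ ⦃s t : ℝ⦄, 0 < s → s ≤ t → u t ≤ u s) (S : ℝ≥0∞)
    (hS : ∀ x : ℝ, 0 < x → ∫⁻ t in Ioc (0:ℝ) x, H t ≤ ENNReal.ofReal x * S) :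
    ∫⁻ t in Ioi (0:ℝ), u t * H t ≤ S * ∫⁻ t in Ioi (0:ℝ), u t := by
  have hmemA : ∀ y : ℝ, ∀ t t' : ℝ, 0 < t → t < t' →
      (0 < t' ∧ ENNReal.ofReal y < u t') → (0 < t ∧ ENNReal.ofReal y < u t) := by
    intro y t t' ht htt' ht'
    exact ⟨ht, lt_of_lt_of_le ht'.2 (hanti ht htt'.le)⟩
  have step4 : ∀ y : ℝ,
      ∫⁻ t in {t : ℝ | 0 < t ∧ ENNReal.ofReal y < u t}, H t
        ≤ S * volume {t : ℝ | 0 < t ∧ ENNReal.ofReal y < u t} := by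
    intro y
    set A := {t : ℝ | 0 < t ∧ ENNReal.ofReal y < u t} with hA
    rcases A.eq_empty_or_nonempty with hAe | hAne
    · rw [hAe]; simp
    by_cases hbd : BddAbove A
    · obtain ⟨t0, ht0⟩ := hAne
      set b := sSup A with hb
      have hb0 : 0 < b := lt_of_lt_of_le ht0.1 (le_csSup hbd ht0)
      have hsub : A ⊆ Ioc 0 b := fun t ht => ⟨ht.1, le_csSup hbd ht⟩
      have h1 : ∫⁻ t in A, H t ≤ ENNReal.ofReal b * S :=
        le_trans (lintegral_mono_set hsub) (hS b hb0)
      have h2 : ENNReal.ofReal b ≤ volume A := by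
        have hsub2 : Ioo 0 b ⊆ A := by
          intro t ht
          obtain ⟨t', ht', htt'⟩ := exists_lt_of_lt_csSup ⟨t0, ht0⟩ ht.2
          exact hmemA y t t' ht.1 htt' ht'
        calc ENNReal.ofReal b = volume (Ioo (0:ℝ) b) := by rw [Real.volume_Ioo, sub_zero]
          _ ≤ volume A := measure_mono hsub2
      calc ∫⁻ t in A, H t ≤ ENNReal.ofReal b * S := h1
        _ ≤ volume A * S := mul_le_mul_left h2 S
        _ = S * volume A := mul_comm _ _
    · have hAeq : A = Ioi 0 := by
        ext t
        constructor
        · exact fun ht => ht.1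
        · intro ht
          obtain ⟨t', ht', htt'⟩ := not_bddAbove_iff.mp hbd t
          exact hmemA y t t' ht htt' ht'
      rcases eq_or_ne S 0 with rfl | hSz
      · have hcov : Ioi (0:ℝ) ⊆ ⋃ n : ℕ, Ioc (0:ℝ) (n+1) := by
          intro t ht
          refine mem_iUnion.mpr ⟨⌈t⌉₊, ht, le_trans (Nat.le_ceil t) (by push_cast; linarith)⟩
        have : ∫⁻ t in A, H t = 0 := by
          rw [hAeq]
          refine le_antisymm ?_ (zero_le)
          calc ∫⁻ t in Ioi (0:ℝ), H t ≤ ∫⁻ t in ⋃ n : ℕ, Ioc (0:ℝ) (n+1), H t :=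
              lintegral_mono_set hcov
            _ ≤ ∑' n : ℕ, ∫⁻ t in Ioc (0:ℝ) (n+1), H t := lintegral_iUnion_le _ _
            _ ≤ ∑' n : ℕ, 0 := by
                refine ENNReal.tsum_le_tsum fun n => ?_
                have := hS (n+1) (by positivity)
                simpa using this
            _ = 0 := by simp
        rw [this]
        exact zero_le
      · rw [hAeq, Real.volume_Ioi, ENNReal.mul_top hSz]
        exact le_top
  have hmono : Antitone (fun y : ℝ => volume {t : ℝ | 0 < t ∧ ENNReal.ofReal y < u t}) := by
    intro y y' hyy'
    refine measure_mono fun t ht => ⟨ht.1, lt_of_le_of_lt (ofReal_le_ofReal hyy') ht.2⟩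
  calc ∫⁻ t in Ioi (0:ℝ), u t * H t
      = ∫⁻ y in Ioi (0:ℝ), ∫⁻ t in Ioi (0:ℝ), (if ENNReal.ofReal y < u t then H t else 0) :=
        double_int u H hu hH
    _ ≤ ∫⁻ y in Ioi (0:ℝ), S * volume {t : ℝ | 0 < t ∧ ENNReal.ofReal y < u t} := by
        refine lintegral_mono fun y => ?_
        rw [inner_eq u H hu y]
        exact step4 y
    _ = S * ∫⁻ y in Ioi (0:ℝ), volume {t : ℝ | 0 < t ∧ ENNReal.ofReal y < u t} :=
        lintegral_const_mul S hmono.measurable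
    _ = S * ∫⁻ t in Ioi (0:ℝ), u t := by
        congr 1
        have h1 := double_int u (fun _ => 1) hu measurable_const
        simp only [mul_one] at h1
        rw [h1]
        refine lintegral_congr fun y => ?_
        rw [inner_eq u (fun _ => 1) hu y, setLIntegral_one]


lemma scale_half (F : ℝ → ℝ≥0∞) (hF : Measurable F) :
    ∫⁻ t in Ioi (0:ℝ), F (2⁻¹ * t) = 2 * ∫⁻ x in Ioi (0:ℝ), F x := by
  have hm : Measurable fun t : ℝ => (2:ℝ)⁻¹ * t := measurable_id.const_mul _
  have hpre : (fun t : ℝ => (2:ℝ)⁻¹ * t) ⁻¹' (Ioi 0) = Ioi 0 := by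
    ext t
    simp only [mem_preimage, mem_Ioi]
    constructor
    · intro h; nlinarith
    · intro h; positivity
  have hmap : Measure.map (fun t : ℝ => (2:ℝ)⁻¹ * t) volume = (2 : ℝ≥0∞) • volume := by
    rw [Real.map_volume_mul_left (by norm_num : ((2:ℝ)⁻¹) ≠ 0)]
    norm_num
  calc ∫⁻ t in Ioi (0:ℝ), F (2⁻¹ * t)
      = ∫⁻ t, F ((2:ℝ)⁻¹ * t) ∂(volume.restrict ((fun t : ℝ => (2:ℝ)⁻¹ * t) ⁻¹' (Ioi 0))) := by
        rw [hpre]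
    _ = ∫⁻ x, F x ∂((volume.restrict ((fun t : ℝ => (2:ℝ)⁻¹ * t) ⁻¹' (Ioi 0))).map
          (fun t : ℝ => (2:ℝ)⁻¹ * t)) := (lintegral_map hF hm).symm
    _ = ∫⁻ x, F x ∂((volume.map (fun t : ℝ => (2:ℝ)⁻¹ * t)).restrict (Ioi 0)) := by
        rw [Measure.restrict_map hm measurableSet_Ioi]
    _ = 2 * ∫⁻ x in Ioi (0:ℝ), F x := by
        rw [hmap, Measure.restrict_smul, lintegral_smul_measure, smul_eq_mul]

lemma partA (p : ℝ) (hp : 1 ≤ p) (g h : ℝ → ℝ) (hg : Measurable g) (hh : Measurable h) :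
    LpNorm p (fun t => g t * h t) ≤ ENNReal.ofReal 10 * (TLNorm p g * GNorm p h) := by
  have hp0 : (0:ℝ) < p := lt_of_lt_of_le one_pos hp
  have hp0' : p ≠ 0 := hp0.ne'
  have hip : (0:ℝ) ≤ 1/p := by positivity
  set E : ℝ → ℝ≥0∞ := fun x =>
    essSup (fun t => ENNReal.ofReal |g t|) (volume.restrict (Ici x)) with hE
  have hEanti : Antitone E := by
    intro x y hxy
    refine essSup_mono_measure ?_
    exact Measure.absolutelyContinuous_of_le (Measure.restrict_mono (Ici_subset_Ici.mpr hxy) le_rfl)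
  have hEmeas : Measurable E := hEanti.measurable
  set D : ℝ → ℝ≥0∞ := fun t => ⨅ q : ℚ, if 0 < (q:ℝ) ∧ (q:ℝ) < t then E q else ⊤ with hD
  have hDmeas : Measurable D := by
    refine Measurable.iInf fun q => ?_
    refine Measurable.ite ?_ measurable_const measurable_const
    have : {t : ℝ | 0 < (q:ℝ) ∧ (q:ℝ) < t} = {t : ℝ | 0 < (q:ℝ)} ∩ Ioi (q:ℝ) := by
      ext t; simp [mem_Ioi]
    rw [this]
    exact (MeasurableSet.const _).inter measurableSet_Ioi
  have hDanti : ∀ ⦃s t : ℝ⦄, 0 < s → s ≤ t → D t ≤ D s := by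
    intro s t _ hst
    refine le_iInf fun q => ?_
    by_cases hq : 0 < (q:ℝ) ∧ (q:ℝ) < s
    · rw [if_pos hq]
      have h1 : D t ≤ if 0 < (q:ℝ) ∧ (q:ℝ) < t then E q else ⊤ := iInf_le _ q
      rwa [if_pos ⟨hq.1, lt_of_lt_of_le hq.2 hst⟩] at h1
    · rw [if_neg hq]; exact le_top
  -- a.e. bound |g| ≤ D on (0,∞)
  have hae : ∀ᵐ t ∂volume, 0 < t → ENNReal.ofReal |g t| ≤ D t := by
    have h1 : ∀ q : ℚ, ∀ᵐ t ∂volume, t ∈ Ici (q:ℝ) → ENNReal.ofReal |g t| ≤ E q := fun q =>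
      (ae_restrict_iff' measurableSet_Ici).mp (ENNReal.ae_le_essSup _)
    filter_upwards [ae_all_iff.mpr h1] with t ht htpos
    refine le_iInf fun q => ?_
    by_cases hq : 0 < (q:ℝ) ∧ (q:ℝ) < t
    · rw [if_pos hq]; exact ht q hq.2.le
    · rw [if_neg hq]; exact le_top
  -- D t ≤ E (t/2)
  have hDE : ∀ t : ℝ, 0 < t → D t ≤ E (2⁻¹ * t) := by
    intro t ht
    obtain ⟨q, hq1, hq2⟩ := exists_rat_btwn (show 2⁻¹ * t < t by linarith)
    have hq0 : 0 < (q:ℝ) := lt_trans (by positivity) hq1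
    have h1 : D t ≤ if 0 < (q:ℝ) ∧ (q:ℝ) < t then E q else ⊤ := iInf_le _ q
    rw [if_pos ⟨hq0, hq2⟩] at h1
    exact h1.trans (hEanti hq1.le)
  set S := (GNorm p h) ^ p with hSdef
  set Hh : ℝ → ℝ≥0∞ := fun t => ENNReal.ofReal |h t| ^ p with hHh
  have hHhmeas : Measurable Hh := (ENNReal.measurable_ofReal.comp hh.abs).pow measurable_const
  have hS : ∀ x : ℝ, 0 < x → ∫⁻ t in Ioc (0:ℝ) x, Hh t ≤ ENNReal.ofReal x * S := by
    intro x hx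
    have hterm : ((ENNReal.ofReal x)⁻¹ * ∫⁻ t in Ioc (0:ℝ) x, Hh t) ^ (1/p) ≤ GNorm p h := by
      rw [GNorm]
      exact le_iSup₂ (f := fun (x : ℝ) (_ : 0 < x) =>
        ((ENNReal.ofReal x)⁻¹ * ∫⁻ t in Ioc (0:ℝ) x, ENNReal.ofReal |h t| ^ p) ^ (1/p)) x hx
    have h2 := ENNReal.rpow_le_rpow hterm hp0.le
    rw [← ENNReal.rpow_mul, one_div_mul_cancel hp0', ENNReal.rpow_one] at h2
    have h3 : (∫⁻ t in Ioc (0:ℝ) x, Hh t)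
        = ENNReal.ofReal x * ((ENNReal.ofReal x)⁻¹ * ∫⁻ t in Ioc (0:ℝ) x, Hh t) := by
      rw [← mul_assoc, ENNReal.mul_inv_cancel (ENNReal.ofReal_pos.mpr hx).ne' ofReal_ne_top,
        one_mul]
    rw [h3]
    exact mul_le_mul_right h2 _
  have hu : Measurable fun t => D t ^ p := hDmeas.pow measurable_const
  have huanti : ∀ ⦃s t : ℝ⦄, 0 < s → s ≤ t → D t ^ p ≤ D s ^ p := fun s t hs hst =>
    ENNReal.rpow_le_rpow (hDanti hs hst) hp0.le
  -- main chain
  have main : ∫⁻ t in Ioi (0:ℝ), ENNReal.ofReal |g t * h t| ^ p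
      ≤ S * (2 * ∫⁻ x in Ioi (0:ℝ), E x ^ p) := by
    calc ∫⁻ t in Ioi (0:ℝ), ENNReal.ofReal |g t * h t| ^ p
        ≤ ∫⁻ t in Ioi (0:ℝ), D t ^ p * Hh t := by
          refine lintegral_mono_ae ?_
          filter_upwards [ae_restrict_mem measurableSet_Ioi, ae_restrict_of_ae hae]
            with t ht hae' 
          have hb : ENNReal.ofReal |g t * h t| = ENNReal.ofReal |g t| * ENNReal.ofReal |h t| := by
            rw [abs_mul, ENNReal.ofReal_mul (abs_nonneg _)]
          rw [hb, ENNReal.mul_rpow_of_nonneg _ _ hp0.le]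
          exact mul_le_mul_left (ENNReal.rpow_le_rpow (hae' ht) hp0.le) _
      _ ≤ S * ∫⁻ t in Ioi (0:ℝ), D t ^ p := antitone_bound _ _ hu hHhmeas huanti S hS
      _ ≤ S * (2 * ∫⁻ x in Ioi (0:ℝ), E x ^ p) := by
          refine mul_le_mul_right ?_ S
          have h4 : ∫⁻ t in Ioi (0:ℝ), D t ^ p ≤ ∫⁻ t in Ioi (0:ℝ), E (2⁻¹ * t) ^ p := by
            refine setLIntegral_mono ((hEmeas.comp (measurable_id.const_mul _)).pow
              measurable_const) fun t ht => ENNReal.rpow_le_rpow (hDE t ht) hp0.le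
          refine h4.trans ?_
          rw [scale_half (fun x => E x ^ p) (hEmeas.pow measurable_const)]
  -- conclude
  have final := ENNReal.rpow_le_rpow main hip
  rw [LpNorm]
  refine final.trans ?_
  rw [ENNReal.mul_rpow_of_nonneg _ _ hip, ENNReal.mul_rpow_of_nonneg _ _ hip, hSdef,
    ← ENNReal.rpow_mul, mul_one_div_cancel hp0', ENNReal.rpow_one]
  have h2p : (2:ℝ≥0∞) ^ (1/p) ≤ 2 := by
    calc (2:ℝ≥0∞) ^ (1/p) ≤ 2 ^ (1:ℝ) :=
      ENNReal.rpow_le_rpow_of_exponent_le (by norm_num) (by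
        rw [div_le_one hp0]; exact hp)
    _ = 2 := by rw [ENNReal.rpow_one]
  have hTL : (∫⁻ x in Ioi (0:ℝ), E x ^ p) ^ (1/p) = TLNorm p g := rfl
  calc GNorm p h * ((2:ℝ≥0∞) ^ (1/p) * (∫⁻ x in Ioi (0:ℝ), E x ^ p) ^ (1/p))
      = (2:ℝ≥0∞) ^ (1/p) * (TLNorm p g * GNorm p h) := by rw [hTL]; ring
    _ ≤ ENNReal.ofReal 10 * (TLNorm p g * GNorm p h) := by
        refine mul_le_mul_left (h2p.trans ?_) _
        rw [ENNReal.ofReal_ofNat]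
        norm_num



section
variable (φ : ℝ → ℝ≥0∞) (hφ : Measurable φ)

noncomputable def ww (s : ℝ) : ℝ≥0∞ := (∫⁻ t in Ioc (2⁻¹*s) s, φ t) / ENNReal.ofReal s
noncomputable def WW (t : ℝ) : ℝ≥0∞ := ⨆ (s : ℝ) (_ : t ≤ s), ww φ s

lemma WWanti : Antitone (WW φ) := fun t t' htt' =>
  iSup₂_le fun s hs => le_iSup₂ (f := fun (s:ℝ) (_ : t ≤ s) => ww φ s) s (htt'.trans hs)

-- dyadic partition of (0,∞)
lemma iUnion_zpow : (⋃ i : ℤ, Ioc ((2:ℝ)^(i-1)) ((2:ℝ)^i)) = Ioi (0:ℝ) := by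
  ext t
  simp only [mem_iUnion, mem_Ioc, mem_Ioi]
  constructor
  · rintro ⟨i, h1, _⟩
    exact lt_trans (zpow_pos (by norm_num) _) h1
  · intro ht
    obtain ⟨n, hn1, hn2⟩ := exists_mem_Ioc_zpow ht one_lt_two
    exact ⟨n+1, by simpa using hn1, by simpa using hn2⟩

lemma pairwise_zpow : Pairwise (Function.onFun Disjoint
    fun i : ℤ => Ioc ((2:ℝ)^(i-1)) ((2:ℝ)^i)) := by
  have key : ∀ i j : ℤ, i < j →
      Disjoint (Ioc ((2:ℝ)^(i-1)) ((2:ℝ)^i)) (Ioc ((2:ℝ)^(j-1)) ((2:ℝ)^j)) := by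
    intro i j hij
    rw [Set.Ioc_disjoint_Ioc]
    calc min ((2:ℝ)^i) ((2:ℝ)^j) ≤ (2:ℝ)^i := min_le_left _ _
      _ ≤ (2:ℝ)^(j-1) := zpow_le_zpow_right₀ one_le_two (by omega)
      _ ≤ max ((2:ℝ)^(i-1)) ((2:ℝ)^(j-1)) := le_max_right _ _
  intro i j hij
  rcases lt_or_gt_of_ne hij with h | h
  · exact key i j h
  · exact (key j i h).symm

lemma sum_Y : ∑' i : ℤ, ∫⁻ t in Ioc ((2:ℝ)^(i-1)) ((2:ℝ)^i), φ t = ∫⁻ t in Ioi (0:ℝ), φ t := by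
  rw [← iUnion_zpow, lintegral_iUnion (fun i => measurableSet_Ioc) pairwise_zpow]

lemma mainW (I : ℝ≥0∞) (hIdef : I = ∫⁻ t in Ioi (0:ℝ), φ t) :
    ∫⁻ x in Ioi (0:ℝ), WW φ x ≤ 4 * I := by
  set Xi : ℤ → ℝ≥0∞ := fun i => ∫⁻ t in Ioc ((2:ℝ)^(i-1)) ((2:ℝ)^(i+1)), φ t with hXi
  set r : ℤ → ℝ≥0∞ := fun i => ENNReal.ofReal ((2:ℝ)^i) with hr
  have hr0 : ∀ i, r i ≠ 0 := fun i => (ENNReal.ofReal_pos.mpr (zpow_pos (by norm_num) _)).ne'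
  have hrt : ∀ i, r i ≠ ⊤ := fun i => ofReal_ne_top
  -- step 1: pointwise bound
  have step1 : ∀ t : ℝ, 0 < t → WW φ t ≤
      ∑' i : ℤ, (Ioc (0:ℝ) ((2:ℝ)^(i+1))).indicator (fun _ => Xi i / r i) t := by
    intro t ht
    refine iSup₂_le fun s hs => ?_
    have hs0 : 0 < s := lt_of_lt_of_le ht hs
    obtain ⟨i, hi1, hi2⟩ := exists_mem_Ico_zpow hs0 one_lt_two
    have hws : ww φ s ≤ Xi i / r i := by
      refine ENNReal.div_le_div (lintegral_mono_set ?_) (ENNReal.ofReal_le_ofReal hi1)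
      refine Ioc_subset_Ioc ?_ hi2.le
      calc (2:ℝ)^(i-1) = 2⁻¹ * 2^i := by
            rw [zpow_sub_one₀ (by norm_num : (2:ℝ) ≠ 0)]; ring
        _ ≤ 2⁻¹ * s := by nlinarith
    have hmem : t ∈ Ioc (0:ℝ) ((2:ℝ)^(i+1)) := ⟨ht, le_trans hs hi2.le⟩
    calc ww φ s ≤ Xi i / r i := hws
      _ = (Ioc (0:ℝ) ((2:ℝ)^(i+1))).indicator (fun _ => Xi i / r i) t := by
          rw [Set.indicator_of_mem hmem]
      _ ≤ _ := ENNReal.le_tsum i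
  -- step 2: integrate
  have hmeas : ∀ i : ℤ, Measurable ((Ioc (0:ℝ) ((2:ℝ)^(i+1))).indicator
      (fun _ => Xi i / r i)) := fun i => measurable_const.indicator measurableSet_Ioc
  calc ∫⁻ x in Ioi (0:ℝ), WW φ x
      ≤ ∫⁻ x in Ioi (0:ℝ), ∑' i : ℤ, (Ioc (0:ℝ) ((2:ℝ)^(i+1))).indicator
          (fun _ => Xi i / r i) x := by
        refine setLIntegral_mono (Measurable.ennreal_tsum hmeas) fun x hx => step1 x hx
    _ = ∑' i : ℤ, ∫⁻ x in Ioi (0:ℝ), (Ioc (0:ℝ) ((2:ℝ)^(i+1))).indicator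
          (fun _ => Xi i / r i) x := lintegral_tsum fun i => (hmeas i).aemeasurable
    _ = ∑' i : ℤ, 2 * Xi i := by
        refine tsum_congr fun i => ?_
        rw [lintegral_indicator measurableSet_Ioc, Measure.restrict_restrict measurableSet_Ioc,
          inter_eq_self_of_subset_left Ioc_subset_Ioi_self, setLIntegral_const,
          Real.volume_Ioc]
        have h2 : ENNReal.ofReal ((2:ℝ)^(i+1) - 0) = 2 * r i := by
          rw [sub_zero, hr, zpow_add_one₀ (by norm_num : (2:ℝ) ≠ 0),
            ENNReal.ofReal_mul (by positivity), ENNReal.ofReal_ofNat, mul_comm]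
        rw [h2, ← mul_assoc, mul_comm (Xi i / r i) 2, mul_assoc,
          ENNReal.div_mul_cancel (hr0 i) (hrt i)]
    _ ≤ 4 * I := by
        have hsplit : ∀ i : ℤ, Xi i = (∫⁻ t in Ioc ((2:ℝ)^(i-1)) ((2:ℝ)^i), φ t)
            + ∫⁻ t in Ioc ((2:ℝ)^i) ((2:ℝ)^(i+1)), φ t := by
          intro i
          rw [hXi]
          rw [← lintegral_union measurableSet_Ioc (Set.Ioc_disjoint_Ioc_of_le le_rfl),
            Set.Ioc_union_Ioc_eq_Ioc (zpow_le_zpow_right₀ one_le_two (by omega))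
              (zpow_le_zpow_right₀ one_le_two (by omega))]
        simp_rw [hsplit, mul_add]
        have hY : ∑' i : ℤ, ∫⁻ t in Ioc ((2:ℝ)^(i-1)) ((2:ℝ)^i), φ t = I := by
          rw [hIdef, sum_Y]
        have hZ : ∑' i : ℤ, ∫⁻ t in Ioc ((2:ℝ)^i) ((2:ℝ)^(i+1)), φ t = I := by
          calc ∑' i : ℤ, ∫⁻ t in Ioc ((2:ℝ)^i) ((2:ℝ)^(i+1)), φ t
              = ∑' i : ℤ, ∫⁻ t in Ioc ((2:ℝ)^((i+1)-1)) ((2:ℝ)^(i+1)), φ t := by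
                refine tsum_congr fun i => ?_
                norm_num
            _ = ∑' i : ℤ, ∫⁻ t in Ioc ((2:ℝ)^(i-1)) ((2:ℝ)^i), φ t :=
                (Equiv.addRight (1:ℤ)).tsum_eq
                  (fun i => ∫⁻ t in Ioc ((2:ℝ)^(i-1)) ((2:ℝ)^i), φ t)
            _ = I := hY
        rw [ENNReal.tsum_add, ENNReal.tsum_mul_left, ENNReal.tsum_mul_left, hY, hZ]
        exact le_of_eq (by ring)

lemma geom_sum (x : ℝ) (hx : 0 < x) :
    ∑' n : ℕ, ENNReal.ofReal (x/2^n) = ENNReal.ofReal x * 2 := by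
  have h1 : ∀ n : ℕ, ENNReal.ofReal (x/2^n)
      = ENNReal.ofReal x * (ENNReal.ofReal 2⁻¹)^n := by
    intro n
    rw [div_eq_mul_inv, ← inv_pow, ENNReal.ofReal_mul hx.le, ENNReal.ofReal_pow (by norm_num)]
  simp_rw [h1]
  rw [ENNReal.tsum_mul_left, ENNReal.tsum_geometric]
  congr 1
  have h2 : (1:ℝ≥0∞) - ENNReal.ofReal 2⁻¹ = ENNReal.ofReal 2⁻¹ := by
    rw [← ENNReal.ofReal_one, ← ENNReal.ofReal_sub _ (by norm_num)]
    norm_num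
  rw [h2, ← ENNReal.ofReal_inv_of_pos (by norm_num : (0:ℝ) < 2⁻¹)]
  norm_num

lemma cover_Ioc (x : ℝ) (hx : 0 < x) :
    Ioc (0:ℝ) x = ⋃ n : ℕ, Ioc (x/2^(n+1)) (x/2^n) := by
  ext t
  simp only [mem_iUnion, mem_Ioc]
  constructor
  · rintro ⟨ht0, htx⟩
    have hP : ∃ n : ℕ, x/2^(n+1) < t := by
      obtain ⟨n, hn⟩ := pow_unbounded_of_one_lt (x/t) (one_lt_two)
      refine ⟨n, ?_⟩
      rw [div_lt_iff₀ (by positivity)] at hn ⊢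
      calc x < t * 2^n := by linarith
        _ ≤ t * 2^(n+1) := by
            have : (2:ℝ)^n ≤ 2^(n+1) := by
              apply pow_le_pow_right₀ (by norm_num); omega
            nlinarith
    classical
    let N := Nat.find hP
    refine ⟨N, Nat.find_spec hP, ?_⟩
    rcases Nat.eq_zero_or_pos N with hN | hN
    · rw [hN]; simpa using htx
    · obtain ⟨m, hm⟩ : ∃ m, N = m + 1 := ⟨N - 1, by omega⟩
      have := Nat.find_min hP (m := m) (by omega)
      push_neg at this
      rw [hm]
      exact this
  · rintro ⟨n, hn1, hn2⟩
    constructor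
    · exact lt_trans (by positivity) hn1
    · calc t ≤ x/2^n := hn2
        _ ≤ x/1 := by
          apply div_le_div_of_nonneg_left hx.le one_pos
          exact one_le_pow₀ (by norm_num)
        _ = x := div_one x

lemma mainG (hφ : Measurable φ) (V : ℝ → ℝ≥0∞) (hVW : ∀ t, 0 < t → WW φ t ≤ V t)
    (hfin : ∀ s : ℝ, 0 < s → ∫⁻ t in Ioc (2⁻¹*s) s, φ t ≠ ⊤)
    (x : ℝ) (hx : 0 < x) :
    ∫⁻ t in Ioc (0:ℝ) x, φ t / V t ≤ ENNReal.ofReal x * 2 := by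
  have hpd : Pairwise (Function.onFun Disjoint fun n : ℕ => Ioc (x/2^(n+1)) (x/2^n)) := by
    have key : ∀ n m : ℕ, n < m →
        Disjoint (Ioc (x/2^(n+1)) (x/2^n)) (Ioc (x/2^(m+1)) (x/2^m)) := by
      intro n m hnm
      rw [Set.Ioc_disjoint_Ioc]
      calc min (x/2^n) (x/2^m) ≤ x/2^m := min_le_right _ _
        _ ≤ x/2^(n+1) := by
            apply div_le_div_of_nonneg_left hx.le (by positivity)
            apply pow_le_pow_right₀ (by norm_num); omega
        _ ≤ max (x/2^(n+1)) (x/2^(m+1)) := le_max_left _ _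
    intro n m hnm
    rcases lt_or_gt_of_ne hnm with h | h
    · exact key n m h
    · exact (key m n h).symm
  have hpiece : ∀ n : ℕ, ∫⁻ t in Ioc (x/2^(n+1)) (x/2^n), φ t / V t
      ≤ ENNReal.ofReal (x/2^n) := by
    intro n
    set s : ℝ := x/2^n with hs
    have hs0 : 0 < s := by positivity
    have heq : x/2^(n+1) = 2⁻¹ * s := by
      rw [hs, pow_succ]; field_simp
    rw [heq]
    set a : ℝ≥0∞ := ∫⁻ t in Ioc (2⁻¹*s) s, φ t with ha
    have hVlow : ∀ t, t ∈ Ioc (2⁻¹*s) s → a / ENNReal.ofReal s ≤ V t := by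
      intro t ht
      have ht0 : 0 < t := lt_trans (by positivity) ht.1
      refine le_trans ?_ (hVW t ht0)
      exact le_iSup₂ (f := fun (s' : ℝ) (_ : t ≤ s') => ww φ s') s ht.2
    rcases eq_or_ne a 0 with haz | haz
    · have hzero : ∀ᵐ t ∂(volume.restrict (Ioc (2⁻¹*s) s)), φ t = 0 :=
        (lintegral_eq_zero_iff' hφ.aemeasurable).mp haz
      have : ∫⁻ t in Ioc (2⁻¹*s) s, φ t / V t = 0 := by
        rw [← lintegral_zero]
        refine lintegral_congr_ae ?_
        filter_upwards [hzero] with t h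
        rw [h, ENNReal.zero_div]
      rw [this]
      exact zero_le
    · have hat : a ≠ ⊤ := hfin s hs0
      have hc : ENNReal.ofReal s / a ≠ ⊤ := (ENNReal.div_lt_top ofReal_ne_top haz).ne
      calc ∫⁻ t in Ioc (2⁻¹*s) s, φ t / V t
          ≤ ∫⁻ t in Ioc (2⁻¹*s) s, φ t * (ENNReal.ofReal s / a) := by
            refine setLIntegral_mono' measurableSet_Ioc fun t ht => ?_
            calc φ t / V t ≤ φ t / (a / ENNReal.ofReal s) :=
                ENNReal.div_le_div_left (hVlow t ht) _
              _ = φ t * (ENNReal.ofReal s / a) := by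
                  rw [div_eq_mul_inv, ENNReal.inv_div (Or.inl ofReal_ne_top) (Or.inl
                    (ENNReal.ofReal_pos.mpr hs0).ne')]
        _ = a * (ENNReal.ofReal s / a) := lintegral_mul_const' _ _ hc
        _ = ENNReal.ofReal s := by
            rw [mul_comm, ENNReal.div_mul_cancel haz hat]
  calc ∫⁻ t in Ioc (0:ℝ) x, φ t / V t
      = ∑' n : ℕ, ∫⁻ t in Ioc (x/2^(n+1)) (x/2^n), φ t / V t := by
        rw [cover_Ioc x hx, lintegral_iUnion (fun n => measurableSet_Ioc) hpd]
    _ ≤ ∑' n : ℕ, ENNReal.ofReal (x/2^n) := ENNReal.tsum_le_tsum hpiece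
    _ = ENNReal.ofReal x * 2 := geom_sum x hx

end

lemma partB (p : ℝ) (hp : 1 ≤ p) (f : ℝ → ℝ) (hf : Measurable f) (hfin : LpNorm p f < ⊤) :
    ∃ g h : ℝ → ℝ, Measurable g ∧ Measurable h ∧
      (∀ᵐ t ∂(volume.restrict (Set.Ioi (0 : ℝ))), f t = g t * h t) ∧
      TLNorm p g * GNorm p h ≤ ENNReal.ofReal 10 * LpNorm p f := by
  have hp0 : (0:ℝ) < p := lt_of_lt_of_le one_pos hp
  have hp0' : p ≠ 0 := hp0.ne'
  have hip : (0:ℝ) ≤ 1/p := by positivity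
  set φ : ℝ → ℝ≥0∞ := fun t => ENNReal.ofReal |f t| ^ p with hφdef
  have hφ : Measurable φ := (ENNReal.measurable_ofReal.comp hf.abs).pow measurable_const
  set I : ℝ≥0∞ := ∫⁻ t in Ioi (0:ℝ), φ t with hIdef
  have hIfin : I ≠ ⊤ := by
    intro hcon
    rw [LpNorm, ← hφdef, ← hIdef, hcon, ENNReal.top_rpow_of_pos (by positivity)] at hfin
    exact absurd hfin (lt_irrefl _)
  rcases eq_or_ne I 0 with hI0 | hIpos
  · -- trivial case f = 0 a.e.
    refine ⟨fun _ => 0, fun _ => 0, measurable_const, measurable_const, ?_, ?_⟩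
    · have hint0 : ∫⁻ t in Ioi (0:ℝ), φ t = 0 := by rw [← hIdef]; exact hI0
      have hzero : ∀ᵐ t ∂(volume.restrict (Ioi (0:ℝ))), φ t = 0 :=
        (lintegral_eq_zero_iff' hφ.aemeasurable).mp hint0
      filter_upwards [hzero] with t ht
      have h1 : ENNReal.ofReal |f t| = 0 := by
        by_contra hne
        have := ENNReal.rpow_eq_zero_iff.mp ht
        rcases this with ⟨h2, _⟩ | ⟨h2, h3⟩
        · exact hne h2
        · exact absurd h3 (by linarith)
      have h2 : |f t| ≤ 0 := ENNReal.ofReal_eq_zero.mp h1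
      have : f t = 0 := abs_eq_zero.mp (le_antisymm h2 (abs_nonneg _))
      simpa [this]
    · have hTL : TLNorm p (fun _ => (0:ℝ)) = 0 := by
        rw [TLNorm]
        have : ∀ x : ℝ, essSup (fun t => ENNReal.ofReal |(0:ℝ)|) (volume.restrict (Ici x)) = 0 := by
          intro x
          refine le_antisymm (essSup_le_of_ae_le _ (Filter.Eventually.of_forall fun t => by
            simp)) (zero_le)
        have e1 : ∀ x : ℝ, (essSup (fun t => ENNReal.ofReal |(0:ℝ)|)
            (volume.restrict (Ici x))) ^ p = 0 := by
          intro x; rw [this x, ENNReal.zero_rpow_of_pos hp0]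
        rw [lintegral_congr fun x => e1 x, lintegral_zero,
          ENNReal.zero_rpow_of_pos (one_div_pos.mpr hp0)]
      rw [hTL, zero_mul]
      exact zero_le
  -- main case
  · set W : ℝ → ℝ≥0∞ := WW φ with hWdef
    have hWanti : Antitone W := WWanti φ
    have hWmeas : Measurable W := hWanti.measurable
    set V : ℝ → ℝ≥0∞ := fun t => W t + I * ENNReal.ofReal (Real.exp (-t)) with hVdef
    have hVanti : Antitone V := by
      intro a b hab
      exact add_le_add (hWanti hab) (mul_le_mul_right (ENNReal.ofReal_le_ofReal
        (Real.exp_le_exp.mpr (neg_le_neg hab))) I)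
    have hVmeas : Measurable V := hWmeas.add
      (measurable_const.mul (ENNReal.measurable_ofReal.comp (Real.measurable_exp.comp
        measurable_neg)))
    have hmassfin : ∀ s : ℝ, 0 < s → ∫⁻ t in Ioc (2⁻¹*s) s, φ t ≠ ⊤ := by
      intro s hs
      refine ne_top_of_le_ne_top hIfin ?_
      rw [hIdef]
      refine lintegral_mono_set fun t ht => ?_
      exact lt_trans (by positivity) ht.1
    have hWle : ∀ x : ℝ, 0 < x → W x ≤ I / ENNReal.ofReal x := by
      intro x hx
      refine iSup₂_le fun s hs => ?_
      refine ENNReal.div_le_div ?_ (ENNReal.ofReal_le_ofReal hs)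
      rw [hIdef]
      refine lintegral_mono_set fun t ht => ?_
      have hs0 : 0 < s := lt_of_lt_of_le hx hs
      exact lt_trans (by positivity) ht.1
    have hVfin : ∀ x : ℝ, 0 < x → V x ≠ ⊤ := by
      intro x hx
      rw [hVdef]
      refine ENNReal.add_ne_top.mpr ⟨?_, ?_⟩
      · exact ((hWle x hx).trans_lt (ENNReal.div_lt_top hIfin
          (ENNReal.ofReal_pos.mpr hx).ne')).ne
      · exact ENNReal.mul_ne_top hIfin ofReal_ne_top
    have hVpos : ∀ x : ℝ, 0 < V x := by
      intro x
      have h1 : (0:ℝ≥0∞) < I * ENNReal.ofReal (Real.exp (-x)) :=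
        ENNReal.mul_pos hIpos (ENNReal.ofReal_pos.mpr (Real.exp_pos _)).ne'
      calc (0:ℝ≥0∞) < I * ENNReal.ofReal (Real.exp (-x)) := h1
        _ ≤ W x + I * ENNReal.ofReal (Real.exp (-x)) := le_add_self
    set g : ℝ → ℝ := fun t => if 0 < t then (V t).toReal ^ (1/p) else 0 with hgdef
    have hgmeas : Measurable g := Measurable.ite measurableSet_Ioi
      ((ENNReal.measurable_toReal.comp hVmeas).pow measurable_const) measurable_const
    have hgpos : ∀ t : ℝ, 0 < t → 0 < g t := by
      intro t ht
      rw [hgdef]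
      simp only [if_pos ht]
      exact Real.rpow_pos_of_pos (ENNReal.toReal_pos (hVpos t).ne' (hVfin t ht)) _
    set h : ℝ → ℝ := fun t => if 0 < t then f t / g t else 0 with hhdef
    have hhmeas : Measurable h := Measurable.ite measurableSet_Ioi (hf.div hgmeas)
      measurable_const
    have haeq : ∀ᵐ t ∂(volume.restrict (Set.Ioi (0:ℝ))), f t = g t * h t := by
      filter_upwards [ae_restrict_mem measurableSet_Ioi] with t ht
      have ht' : (0:ℝ) < t := ht
      rw [hhdef]
      simp only [if_pos ht']
      rw [mul_comm, div_mul_cancel₀ _ (hgpos t ht').ne']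
    have hgof : ∀ t : ℝ, 0 < t → ENNReal.ofReal (g t) = V t ^ (1/p) := by
      intro t ht
      rw [hgdef]
      simp only [if_pos ht]
      rw [← ENNReal.ofReal_rpow_of_nonneg ENNReal.toReal_nonneg hip,
        ENNReal.ofReal_toReal (hVfin t ht)]
    refine ⟨g, h, hgmeas, hhmeas, haeq, ?_⟩
    -- TLNorm bound
    have hTL : TLNorm p g ≤ (5 * I) ^ (1/p) := by
      have hEb : ∀ x : ℝ, 0 < x →
          (essSup (fun t => ENNReal.ofReal |g t|) (volume.restrict (Ici x))) ^ p ≤ V x := by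
        intro x hx
        have h1 : essSup (fun t => ENNReal.ofReal |g t|) (volume.restrict (Ici x))
            ≤ V x ^ (1/p) := by
          refine essSup_le_of_ae_le _ ?_
          filter_upwards [ae_restrict_mem measurableSet_Ici] with t ht
          have ht0 : 0 < t := lt_of_lt_of_le hx ht
          have : |g t| = g t := abs_of_pos (hgpos t ht0)
          rw [this, hgof t ht0]
          exact ENNReal.rpow_le_rpow (hVanti ht) hip
        calc (essSup (fun t => ENNReal.ofReal |g t|) (volume.restrict (Ici x))) ^ p
            ≤ (V x ^ (1/p)) ^ p := ENNReal.rpow_le_rpow h1 hp0.le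
          _ = V x := by rw [← ENNReal.rpow_mul, one_div_mul_cancel hp0', ENNReal.rpow_one]
      have hVint : ∫⁻ x in Ioi (0:ℝ), V x ≤ 5 * I := by
        have hW4 : ∫⁻ x in Ioi (0:ℝ), W x ≤ 4 * I := mainW φ I hIdef
        have hexp : ∫⁻ x in Ioi (0:ℝ), I * ENNReal.ofReal (Real.exp (-x)) = I := by
          rw [lintegral_const_mul I measurable_neg.exp.ennreal_ofReal]
          have : ∫⁻ x in Ioi (0:ℝ), ENNReal.ofReal (Real.exp (-x)) = 1 := by
            rw [← ofReal_integral_eq_lintegral_ofReal]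
            · rw [integral_exp_neg_Ioi_zero, ENNReal.ofReal_one]
            · have := exp_neg_integrableOn_Ioi 0 (one_pos)
              simpa [IntegrableOn] using this
            · exact Filter.Eventually.of_forall fun x => (Real.exp_pos _).le
          rw [this, mul_one]
        calc ∫⁻ x in Ioi (0:ℝ), V x
            = (∫⁻ x in Ioi (0:ℝ), W x) + ∫⁻ x in Ioi (0:ℝ),
                I * ENNReal.ofReal (Real.exp (-x)) := by
              rw [hVdef, lintegral_add_left hWmeas]
          _ ≤ 4 * I + I := add_le_add hW4 (le_of_eq hexp)
          _ = 5 * I := by ring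
      calc TLNorm p g ≤ (∫⁻ x in Ioi (0:ℝ), V x) ^ (1/p) := by
            rw [TLNorm]
            refine ENNReal.rpow_le_rpow ?_ hip
            exact setLIntegral_mono hVmeas fun x hx => hEb x hx
        _ ≤ (5 * I) ^ (1/p) := ENNReal.rpow_le_rpow hVint hip
    -- GNorm bound
    have hG : GNorm p h ≤ 2 := by
      rw [GNorm]
      refine iSup₂_le fun x hx => ?_
      have hpoint : ∀ t : ℝ, t ∈ Ioc (0:ℝ) x → ENNReal.ofReal |h t| ^ p = φ t / V t := by
        intro t ht
        rw [hhdef]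
        simp only [if_pos ht.1]
        rw [abs_div, abs_of_pos (hgpos t ht.1),
          ENNReal.ofReal_div_of_pos (hgpos t ht.1),
          ENNReal.div_rpow_of_nonneg _ _ hp0.le, hgof t ht.1,
          ← ENNReal.rpow_mul, one_div_mul_cancel hp0', ENNReal.rpow_one, hφdef]
      have hint : ∫⁻ t in Ioc (0:ℝ) x, ENNReal.ofReal |h t| ^ p
          ≤ ENNReal.ofReal x * 2 := by
        calc ∫⁻ t in Ioc (0:ℝ) x, ENNReal.ofReal |h t| ^ p
            = ∫⁻ t in Ioc (0:ℝ) x, φ t / V t := by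
              refine setLIntegral_congr_fun measurableSet_Ioc ?_
              exact hpoint
          _ ≤ ENNReal.ofReal x * 2 := mainG φ hφ V (fun t _ => le_add_right le_rfl) hmassfin x hx
      have hterm : (ENNReal.ofReal x)⁻¹ * ∫⁻ t in Ioc (0:ℝ) x, ENNReal.ofReal |h t| ^ p
          ≤ 2 := by
        calc (ENNReal.ofReal x)⁻¹ * ∫⁻ t in Ioc (0:ℝ) x, ENNReal.ofReal |h t| ^ p
            ≤ (ENNReal.ofReal x)⁻¹ * (ENNReal.ofReal x * 2) := mul_le_mul_right hint _
          _ = 2 := by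
              rw [← mul_assoc, ENNReal.inv_mul_cancel (ENNReal.ofReal_pos.mpr hx).ne'
                ofReal_ne_top, one_mul]
      calc ((ENNReal.ofReal x)⁻¹ * ∫⁻ t in Ioc (0:ℝ) x, ENNReal.ofReal |h t| ^ p) ^ (1/p)
          ≤ (2:ℝ≥0∞) ^ (1/p) := ENNReal.rpow_le_rpow hterm hip
        _ ≤ (2:ℝ≥0∞) ^ (1:ℝ) := ENNReal.rpow_le_rpow_of_exponent_le (by norm_num)
            (by rw [div_le_one hp0]; exact hp)
        _ = 2 := ENNReal.rpow_one 2
    -- combine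
    have hfive : ((5:ℝ≥0∞) * I) ^ (1/p) ≤ 5 * I ^ (1/p) := by
      rw [ENNReal.mul_rpow_of_nonneg _ _ hip]
      refine mul_le_mul_left ?_ _
      have h51 : (5:ℝ≥0∞) ^ (1/p) ≤ 5 := by
        have hle := ENNReal.rpow_le_rpow_of_exponent_le (x := (5:ℝ≥0∞)) (by norm_num)
          (show 1/p ≤ 1 by rw [div_le_one hp0]; exact hp)
        simpa using hle
      exact h51
    have hLp : LpNorm p f = I ^ (1/p) := rfl
    calc TLNorm p g * GNorm p h ≤ (5 * I) ^ (1/p) * 2 := mul_le_mul' hTL hG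
      _ ≤ 5 * I ^ (1/p) * 2 := mul_le_mul_left hfive 2
      _ = 10 * I ^ (1/p) := by ring
      _ = ENNReal.ofReal 10 * LpNorm p f := by
          rw [hLp, ENNReal.ofReal_ofNat]


end Aux

/-- The factorization `L_p = τL_p ⊙ G_p` (Bennett; Astashkin–Maligranda). -/
theorem stmt_13 (p : ℝ) (hp : 1 ≤ p) :
    ∃ C : ℝ, 1 ≤ C ∧
      (∀ g h : ℝ → ℝ, Measurable g → Measurable h →
        LpNorm p (fun t => g t * h t) ≤ ENNReal.ofReal C * (TLNorm p g * GNorm p h)) ∧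
      (∀ f : ℝ → ℝ, Measurable f → LpNorm p f < ⊤ →
        ∃ g h : ℝ → ℝ, Measurable g ∧ Measurable h ∧
          (∀ᵐ t ∂(volume.restrict (Set.Ioi (0 : ℝ))), f t = g t * h t) ∧
          TLNorm p g * GNorm p h ≤ ENNReal.ofReal C * LpNorm p f) := by
  refine ⟨10, by norm_num, ?_, ?_⟩
  · intro g h hg hh
    exact partA p hp g h hg hh
  · intro f hf hfin
    exact partB p hp f hf hfin
end

section
/- Let 1 < p ≤ q < ∞. There exist constants c, C > 0, depending only on p and q, such that for every real sequence z = (z_n)_{n≥1}: c · sup_{n≥1} n^{1/q − 1/p} |z_n| ≤ sup{ ‖z·x‖_{ces_q} : x a real sequence with ‖x‖_{ces_p} ≤ 1 } ≤ C · sup_{n≥1} n^{1/q − 1/p} |z_n|, where z·x denotes the coordinatewise product and all quantities take values in [0,∞]. -/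
open ENNReal

/-- The Cesàro norm `‖x‖_{ces_p} = (∑_{n=1}^∞ ((1/n)∑_{k=1}^n |x_k|)^p)^{1/p}`
of a real sequence (indexed so that the entries of the sequence are `x 1, x 2, …`). -/
noncomputable def cesNorm (p : ℝ) (x : ℕ → ℝ) : ℝ≥0∞ :=
  (∑' n : ℕ, (((n : ℝ≥0∞) + 1)⁻¹ * ∑ k ∈ Finset.Icc 1 (n + 1), ENNReal.ofReal |x k|) ^ p) ^ (1 / p)


lemma tele_ineq {s : ℝ} (hs : 1 < s) (j : ℕ) (hj : 1 ≤ j) :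
    ((j : ℝ)) ^ (-s) ≤ (2:ℝ)^s / (s-1) * ((j:ℝ)^(1-s) - ((j:ℝ)+1)^(1-s)) := by
  have hj0 : (0:ℝ) < j := by exact_mod_cast hj
  have hmvt := exists_deriv_eq_slope (fun x : ℝ => x ^ (1-s)) (a := (j:ℝ)) (b := (j:ℝ)+1)
    (by linarith)
    (fun x hx => by
      have hx0 : x ≠ 0 := by
        rcases hx with ⟨h1, _⟩
        have : (0:ℝ) < x := lt_of_lt_of_le hj0 h1
        positivity
      exact (Real.continuousAt_rpow_const x (1-s) (Or.inl hx0)).continuousWithinAt)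
    (fun x hx => by
      have hx0 : x ≠ 0 := by
        rcases hx with ⟨h1, _⟩
        have : (0:ℝ) < x := lt_of_lt_of_le hj0 h1.le
        positivity
      exact ((Real.hasDerivAt_rpow_const (Or.inl hx0)).differentiableAt).differentiableWithinAt)
  obtain ⟨c, hc, hderiv⟩ := hmvt
  have hc0 : (0:ℝ) < c := lt_trans hj0 hc.1
  have hderiv' : deriv (fun x : ℝ => x ^ (1-s)) c = (1-s) * c ^ (-s) := by
    rw [(Real.hasDerivAt_rpow_const (Or.inl hc0.ne')).deriv]
    ring_nf
  rw [hderiv'] at hderiv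
  have hslope : ((j:ℝ)+1)^(1-s) - (j:ℝ)^(1-s) = (1-s) * c ^ (-s) := by
    have : ((j:ℝ)+1) - (j:ℝ) = 1 := by ring
    rw [this, div_one] at hderiv
    linarith [hderiv]
  have hkey : (j:ℝ)^(1-s) - ((j:ℝ)+1)^(1-s) = (s-1) * c ^ (-s) := by linarith [hslope]
  rw [hkey]
  have hcle : c ≤ 2*(j:ℝ) := by
    have := hc.2
    have : c < (j:ℝ)+1 := hc.2
    have hj1 : (1:ℝ) ≤ (j:ℝ) := by exact_mod_cast hj
    linarith
  have hmono : ((2:ℝ)*(j:ℝ)) ^ (-s) ≤ c ^ (-s) :=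
    Real.rpow_le_rpow_of_nonpos hc0 hcle (by linarith)
  have h2j : ((2:ℝ)*(j:ℝ)) ^ (-s) = ((2:ℝ)^(-s)) * ((j:ℝ))^(-s) :=
    Real.mul_rpow (by norm_num) (le_of_lt hj0)
  have hs1 : (0:ℝ) < s - 1 := by linarith
  have h2s : (0:ℝ) < (2:ℝ)^s := Real.rpow_pos_of_pos (by norm_num) s
  rw [div_mul_eq_mul_div, le_div_iff₀ hs1]
  calc (j:ℝ)^(-s) * (s-1) = (2:ℝ)^s * ((s-1) * (((2:ℝ)^(-s)) * ((j:ℝ))^(-s))) := by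
        rw [Real.rpow_neg (by norm_num : (0:ℝ) ≤ 2)]
        field_simp
    _ ≤ (2:ℝ)^s * ((s-1) * c ^ (-s)) := by
        apply mul_le_mul_of_nonneg_left _ (le_of_lt h2s)
        apply mul_le_mul_of_nonneg_left _ (le_of_lt hs1)
        rw [← h2j]; exact hmono

lemma tele_sum {s : ℝ} (hs : 1 < s) (M : ℕ) (hM : 1 ≤ M) (N : ℕ) :
    ∑ n ∈ Finset.range N, (if M ≤ n+1 then ((n:ℝ)+1)^(1-s) - ((n:ℝ)+2)^(1-s) else 0)
      ≤ ((M:ℝ))^(1-s) := by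
  have key : ∀ N, ∑ n ∈ Finset.range N, (if M ≤ n+1 then ((n:ℝ)+1)^(1-s) - ((n:ℝ)+2)^(1-s) else 0)
      = if M ≤ N then ((M:ℝ))^(1-s) - ((N:ℝ)+1)^(1-s) else 0 := by
    intro N
    induction N with
    | zero =>
        have : ¬ M ≤ 0 := by omega
        simp [this]
    | succ N ih =>
        rw [Finset.sum_range_succ, ih]
        by_cases h1 : M ≤ N
        · have h2 : M ≤ N + 1 := le_trans h1 (Nat.le_succ N)
          simp only [h1, h2, if_true]
          push_cast
          ring
        · by_cases h2 : M ≤ N + 1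
          · have hMN : M = N + 1 := le_antisymm h2 (by omega)
            simp only [h1, h2, if_true, if_false]
            subst hMN
            push_cast
            ring
          · simp [h1, h2]
  rw [key]
  by_cases h : M ≤ N
  · simp only [h, if_true]
    have : (0:ℝ) ≤ ((N:ℝ)+1)^(1-s) := Real.rpow_nonneg (by positivity) _
    linarith
  · simp only [h, if_false]
    exact Real.rpow_nonneg (by positivity) _

lemma tail_bound {s : ℝ} (hs : 1 < s) (M : ℕ) (hM : 1 ≤ M) :
    ∑' n : ℕ, (if M ≤ n+1 then ((n:ℝ≥0∞)+1)^(-s) else 0)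
      ≤ ENNReal.ofReal ((2:ℝ)^s/(s-1)) * (M:ℝ≥0∞)^(1-s) := by
  have hK : (0:ℝ) ≤ (2:ℝ)^s/(s-1) := by
    apply div_nonneg (Real.rpow_nonneg (by norm_num) _) (by linarith)
  set K := (2:ℝ)^s/(s-1) with hKdef
  -- RHS as ofReal
  have hMR : (M:ℝ≥0∞)^(1-s) = ENNReal.ofReal ((M:ℝ)^(1-s)) := by
    rw [← ENNReal.ofReal_rpow_of_pos (by exact_mod_cast hM : (0:ℝ) < (M:ℝ))]
    congr 1
    simp
  rw [hMR, ← ENNReal.ofReal_mul hK]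
  -- bound every finite partial sum
  have hfin : ∀ F : Finset ℕ, ∑ n ∈ F, (if M ≤ n+1 then ((n:ℝ≥0∞)+1)^(-s) else 0)
      ≤ ENNReal.ofReal (K * (M:ℝ)^(1-s)) := by
    intro F
    obtain ⟨N, hFN⟩ := Finset.exists_nat_subset_range F
    calc ∑ n ∈ F, (if M ≤ n+1 then ((n:ℝ≥0∞)+1)^(-s) else 0)
        ≤ ∑ n ∈ Finset.range N, (if M ≤ n+1 then ((n:ℝ≥0∞)+1)^(-s) else 0) :=
          Finset.sum_le_sum_of_subset hFN
      _ ≤ ∑ n ∈ Finset.range N,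
            ENNReal.ofReal (if M ≤ n+1 then K * (((n:ℝ)+1)^(1-s) - ((n:ℝ)+2)^(1-s)) else 0) := by
          apply Finset.sum_le_sum
          intro n _
          by_cases h : M ≤ n+1
          · simp only [h, if_true]
            have hcast : ((n:ℝ≥0∞)+1) = ENNReal.ofReal ((n:ℝ)+1) := by
              rw [ENNReal.ofReal_add (by positivity) zero_le_one]
              simp
            have h1 : ((n:ℝ≥0∞)+1)^(-s) = ENNReal.ofReal (((n:ℝ)+1)^(-s)) := by
              rw [hcast, ← ENNReal.ofReal_rpow_of_pos (by positivity : (0:ℝ) < (n:ℝ)+1)]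
            rw [h1]
            apply ENNReal.ofReal_le_ofReal
            have := tele_ineq hs (n+1) (by omega)
            push_cast at this
            convert this using 3 <;> ring
          · simp [h]
      _ = ENNReal.ofReal (∑ n ∈ Finset.range N,
            (if M ≤ n+1 then K * (((n:ℝ)+1)^(1-s) - ((n:ℝ)+2)^(1-s)) else 0)) := by
          rw [ENNReal.ofReal_sum_of_nonneg]
          · intro n _
            by_cases h : M ≤ n+1
            · simp only [h, if_true]
              apply mul_nonneg hK
              have h2 : ((n:ℝ)+2)^(1-s) ≤ ((n:ℝ)+1)^(1-s) :=
                Real.rpow_le_rpow_of_nonpos (by positivity) (by linarith) (by linarith)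
              linarith
            · simp [h]
      _ ≤ ENNReal.ofReal (K * (M:ℝ)^(1-s)) := by
          apply ENNReal.ofReal_le_ofReal
          have : ∑ n ∈ Finset.range N, (if M ≤ n+1 then K * (((n:ℝ)+1)^(1-s) - ((n:ℝ)+2)^(1-s)) else 0)
              = K * ∑ n ∈ Finset.range N, (if M ≤ n+1 then (((n:ℝ)+1)^(1-s) - ((n:ℝ)+2)^(1-s)) else 0) := by
            rw [Finset.mul_sum]
            apply Finset.sum_congr rfl
            intro n _
            by_cases h : M ≤ n+1 <;> simp [h]
          rw [this]
          exact mul_le_mul_of_nonneg_left (tele_sum hs M hM N) hK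
  rw [ENNReal.tsum_eq_iSup_sum]
  exact iSup_le hfin

lemma jensen_le_one {ι : Type*} (s : Finset ι) (w z : ι → ℝ≥0∞) (hw : ∑ i ∈ s, w i ≤ 1)
    {r : ℝ} (hr : 1 ≤ r) : (∑ i ∈ s, w i * z i) ^ r ≤ ∑ i ∈ s, w i * z i ^ r := by
  set t := ∑ i ∈ s, w i with ht
  by_cases ht0 : t = 0
  · have hz : ∀ i ∈ s, w i = 0 := by
      intro i hi
      exact (Finset.sum_eq_zero_iff.mp ht0) i hi
    have h1 : ∑ i ∈ s, w i * z i = 0 := Finset.sum_eq_zero (fun i hi => by rw [hz i hi, zero_mul])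
    rw [h1, ENNReal.zero_rpow_of_pos (by linarith)]
    exact zero_le
  · have httop : t ≠ ⊤ := ne_top_of_le_ne_top one_ne_top hw
    have hw' : ∑ i ∈ s, w i / t = 1 := by
      simp only [div_eq_mul_inv, ← Finset.sum_mul]
      rw [← ht]
      exact ENNReal.mul_inv_cancel ht0 httop
    have hwi : ∀ i, t * (w i / t) = w i := by
      intro i
      rw [mul_comm, ENNReal.div_mul_cancel ht0 httop]
    have hmain := ENNReal.rpow_arith_mean_le_arith_mean_rpow s (fun i => w i / t) z hw' hr
    have hsum : ∑ i ∈ s, w i * z i = t * ∑ i ∈ s, (w i / t) * z i := by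
      rw [Finset.mul_sum]
      apply Finset.sum_congr rfl
      intro i _
      rw [← mul_assoc, hwi]
    have hsum2 : t * ∑ i ∈ s, (w i / t) * z i ^ r = ∑ i ∈ s, w i * z i ^ r := by
      rw [Finset.mul_sum]
      apply Finset.sum_congr rfl
      intro i _
      rw [← mul_assoc, hwi]
    calc (∑ i ∈ s, w i * z i) ^ r = (t * ∑ i ∈ s, (w i / t) * z i) ^ r := by rw [hsum]
      _ = t ^ r * (∑ i ∈ s, (w i / t) * z i) ^ r :=
          ENNReal.mul_rpow_of_nonneg _ _ (by linarith)
      _ ≤ t ^ r * ∑ i ∈ s, (w i / t) * z i ^ r :=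
          mul_le_mul_right hmain _
      _ = t ^ (r-1) * (t * ∑ i ∈ s, (w i / t) * z i ^ r) := by
          have ht' : t ^ r = t ^ (r-1) * t ^ (1:ℝ) := by
            rw [← ENNReal.rpow_add _ _ ht0 httop]
            norm_num
          rw [ht', ENNReal.rpow_one, mul_assoc]
      _ ≤ 1 * (t * ∑ i ∈ s, (w i / t) * z i ^ r) := by
          apply mul_le_mul_left
          exact ENNReal.rpow_le_one hw (by linarith)
      _ = ∑ i ∈ s, w i * z i ^ r := by rw [one_mul, hsum2]

lemma tsum_disjoint_finsets_le (f : ℕ → ℝ≥0∞) (t : ℕ → Finset ℕ)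
    (hd : ∀ i j, i ≠ j → Disjoint (t i) (t j)) :
    ∑' i, ∑ n ∈ t i, f n ≤ ∑' n, f n := by
  have h1 : ∀ i, ∑ n ∈ t i, f n = ∑' n : ℕ, (if n ∈ t i then f n else 0) := by
    intro i
    rw [tsum_eq_sum (s := t i) (fun b hb => by simp [hb])]
    exact (Finset.sum_congr rfl (fun n hn => by simp [hn])).symm
  calc ∑' i, ∑ n ∈ t i, f n = ∑' i, ∑' n : ℕ, (if n ∈ t i then f n else 0) := by
        exact tsum_congr h1
    _ = ∑' n : ℕ, ∑' i, (if n ∈ t i then f n else 0) := ENNReal.tsum_comm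
    _ ≤ ∑' n, f n := by
        apply ENNReal.tsum_le_tsum
        intro n
        by_cases hex : ∃ i, n ∈ t i
        · obtain ⟨i0, hi0⟩ := hex
          rw [tsum_eq_single i0 (fun j hj => by
            by_cases hmem : n ∈ t j
            · exact absurd hi0 (Finset.disjoint_left.mp (hd j i0 hj) hmem)
            · simp [hmem])]
          simp [hi0]
        · push_neg at hex
          simp [hex]

lemma sum_Ico_pow_two {M : Type*} [AddCommMonoid M] (f : ℕ → M) (t : ℕ) :
    ∑ k ∈ Finset.Ico 1 (2^t), f k = ∑ i ∈ Finset.range t, ∑ k ∈ Finset.Ico (2^i) (2^(i+1)), f k := by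
  induction t with
  | zero => simp
  | succ t ih =>
      rw [Finset.sum_range_succ, ← ih,
        Finset.sum_Ico_consecutive f (Nat.one_le_two_pow) (Nat.pow_le_pow_right (by norm_num) (Nat.le_succ t))]

lemma tsum_rpow_le (f : ℕ → ℝ≥0∞) {r : ℝ} (hr : 1 ≤ r) :
    ∑' i, (f i) ^ r ≤ (∑' i, f i) ^ r := by
  have hfin : ∀ F : Finset ℕ, ∑ i ∈ F, (f i) ^ r ≤ (∑ i ∈ F, f i) ^ r := by
    intro F
    induction F using Finset.cons_induction with
    | empty => simp [ENNReal.zero_rpow_of_pos (by linarith : (0:ℝ) < r)]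
    | cons a F ha ih =>
        rw [Finset.sum_cons, Finset.sum_cons]
        calc (f a) ^ r + ∑ i ∈ F, (f i) ^ r ≤ (f a) ^ r + (∑ i ∈ F, f i) ^ r :=
              add_le_add_right ih _
          _ ≤ (f a + ∑ i ∈ F, f i) ^ r := ENNReal.add_rpow_le_rpow_add _ _ hr
  rw [ENNReal.tsum_eq_iSup_sum]
  apply iSup_le
  intro F
  exact le_trans (hfin F) (ENNReal.rpow_le_rpow (ENNReal.sum_le_tsum F) (by linarith))

noncomputable def E (t : ℝ) : ℝ≥0∞ := (2:ℝ≥0∞) ^ t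

lemma E_add (s t : ℝ) : E (s+t) = E s * E t := ENNReal.rpow_add s t (by norm_num) (by norm_num)
lemma E_ne_zero (t : ℝ) : E t ≠ 0 := by
  simp [E, ENNReal.rpow_eq_zero_iff]
lemma E_ne_top (t : ℝ) : E t ≠ ⊤ := by
  simp [E, ENNReal.rpow_eq_top_iff]
lemma E_mono {s t : ℝ} (h : s ≤ t) : E s ≤ E t :=
  ENNReal.rpow_le_rpow_of_exponent_le (by norm_num) h
lemma E_natCast (i : ℕ) : ((2^i : ℕ) : ℝ≥0∞) = E i := by
  rw [E, Nat.cast_pow, ← ENNReal.rpow_natCast]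
  norm_num
lemma E_rpow (s t : ℝ) : (E s) ^ t = E (s * t) := by
  rw [E, E, ← ENNReal.rpow_mul]

/-- Lemma B: dyadic cover of `Icc 1 m`. -/
lemma icc_le_dyadic (w : ℕ → ℝ≥0∞) (m : ℕ) (hm : 1 ≤ m) :
    ∑ k ∈ Finset.Icc 1 m, w k ≤
      ∑ i ∈ Finset.range (Nat.log2 m + 1), ∑ k ∈ Finset.Ico (2^i) (2^(i+1)), w k := by
  rw [← sum_Ico_pow_two]
  apply Finset.sum_le_sum_of_subset
  intro k hk
  simp only [Finset.mem_Icc] at hk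
  simp only [Finset.mem_Ico]
  constructor
  · exact hk.1
  · calc k ≤ m := hk.2
      _ < 2 ^ (Nat.log2 m + 1) := Nat.lt_log2_self

/-- Lemma A : the dyadic block sums are dominated by the Cesàro sum. -/
lemma blocks_le_ces (p : ℝ) (hp : 1 < p) (a : ℕ → ℝ≥0∞) :
    ∑' i : ℕ, E ((i:ℝ)*(1-p)) * (∑ k ∈ Finset.Ico (2^i) (2^(i+1)), a k) ^ p
      ≤ E (2*p-1) * ∑' n : ℕ, (((n:ℝ≥0∞)+1)⁻¹ * ∑ k ∈ Finset.Icc 1 (n+1), a k) ^ p := by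
  set g : ℕ → ℝ≥0∞ := fun n => (((n:ℝ≥0∞)+1)⁻¹ * ∑ k ∈ Finset.Icc 1 (n+1), a k) ^ p with hg
  set t : ℕ → Finset ℕ := fun i => Finset.Ico (2^(i+1)-1) (2^(i+2)-1) with htdef
  have hdisj : ∀ i j, i ≠ j → Disjoint (t i) (t j) := by
    have mono : ∀ i j : ℕ, i < j → Disjoint (t i) (t j) := by
      intro i j hij
      rw [Finset.disjoint_left]
      intro n hn hn'
      simp only [htdef, Finset.mem_Ico] at hn hn'
      have h1 : 2^(i+2) ≤ 2^(j+1) := Nat.pow_le_pow_right (by norm_num) (by omega)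
      omega
    intro i j hij
    rcases lt_or_gt_of_ne hij with h | h
    · exact mono i j h
    · exact (mono j i h).symm
  have hblock : ∀ i : ℕ, E ((i:ℝ)*(1-p)) * (∑ k ∈ Finset.Ico (2^i) (2^(i+1)), a k) ^ p
      ≤ E (2*p-1) * ∑ n ∈ t i, g n := by
    intro i
    set b := ∑ k ∈ Finset.Ico (2^i) (2^(i+1)), a k with hb
    -- each n in the block contributes at least E(-(i+2)p) * b^p
    have hterm : ∀ n ∈ t i, E (-((i:ℝ)+2)*p) * b ^ p ≤ g n := by
      intro n hn
      simp only [htdef, Finset.mem_Ico] at hn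
      have hsub : Finset.Ico (2^i) (2^(i+1)) ⊆ Finset.Icc 1 (n+1) := by
        intro k hk
        simp only [Finset.mem_Ico] at hk
        simp only [Finset.mem_Icc]
        have h1 : (1:ℕ) ≤ 2^i := Nat.one_le_two_pow
        have h2 : 2^(i+1) ≤ 2^(i+2) := Nat.pow_le_pow_right (by norm_num) (by omega)
        omega
      have hS : b ≤ ∑ k ∈ Finset.Icc 1 (n+1), a k := Finset.sum_le_sum_of_subset hsub
      have hinv : (E ((i:ℝ)+2))⁻¹ ≤ ((n:ℝ≥0∞)+1)⁻¹ := by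
        apply ENNReal.inv_le_inv'
        have : ((n:ℝ≥0∞)+1) = ((n+1 : ℕ) : ℝ≥0∞) := by push_cast; ring
        have hcast2 : ((i:ℝ)+2) = ((i+2:ℕ):ℝ) := by push_cast; ring
        rw [this, hcast2, ← E_natCast]
        apply Nat.cast_le.mpr
        push_cast
        omega
      have : E (-((i:ℝ)+2)*p) * b ^ p = ((E ((i:ℝ)+2))⁻¹ * b) ^ p := by
        rw [ENNReal.mul_rpow_of_nonneg _ _ (by linarith : (0:ℝ) ≤ p)]
        congr 1
        rw [← ENNReal.rpow_neg_one (E ((i:ℝ)+2)), E_rpow, E_rpow]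
        congr 1
        ring
      rw [this, hg]
      exact ENNReal.rpow_le_rpow (mul_le_mul' hinv hS) (by linarith)
    have hcard : (t i).card = 2^(i+1) := by
      simp only [htdef, Nat.card_Ico]
      have h1 : (1:ℕ) ≤ 2^(i+1) := Nat.one_le_two_pow
      have h2 : 2^(i+2) = 2 * 2^(i+1) := by ring
      omega
    calc E ((i:ℝ)*(1-p)) * b ^ p
        = E (2*p-1) * (E ((i:ℝ)+1) * (E (-((i:ℝ)+2)*p) * b ^ p)) := by
          rw [← mul_assoc, ← mul_assoc, ← E_add, ← E_add]
          congr 2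
          ring
      _ = E (2*p-1) * ((t i).card • (E (-((i:ℝ)+2)*p) * b ^ p)) := by
          have hcc : ((t i).card : ℝ≥0∞) = E ((i:ℝ)+1) := by
            rw [hcard, E_natCast]
            congr 1
            push_cast
            ring
          rw [nsmul_eq_mul, hcc]
      _ ≤ E (2*p-1) * ∑ n ∈ t i, g n := by
          apply mul_le_mul_right
          exact Finset.card_nsmul_le_sum (t i) g _ hterm
  calc ∑' i : ℕ, E ((i:ℝ)*(1-p)) * (∑ k ∈ Finset.Ico (2^i) (2^(i+1)), a k) ^ p
      ≤ ∑' i : ℕ, E (2*p-1) * ∑ n ∈ t i, g n := ENNReal.tsum_le_tsum hblock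
    _ = E (2*p-1) * ∑' i : ℕ, ∑ n ∈ t i, g n := ENNReal.tsum_mul_left
    _ ≤ E (2*p-1) * ∑' n, g n := mul_le_mul_right (tsum_disjoint_finsets_le g t hdisj) _

lemma E_inv (t : ℝ) : (E t)⁻¹ = E (-t) := by
  rw [E, E, ENNReal.rpow_neg]

lemma geom_sum_le (J : ℕ) : ∑ i ∈ Finset.range (J+1), E (((i:ℝ)-(J:ℝ))/2) ≤ 4 := by
  have hreflect : ∑ i ∈ Finset.range (J+1), E (((i:ℝ)-(J:ℝ))/2)
      = ∑ i ∈ Finset.range (J+1), (E (-(1/2))) ^ i := by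
    rw [← Finset.sum_range_reflect]
    apply Finset.sum_congr rfl
    intro i hi
    simp only [Finset.mem_range] at hi
    have hiJ : i ≤ J := by omega
    have hc : ((J + 1 - 1 - i : ℕ) : ℝ) = (J:ℝ) - (i:ℝ) := by
      have h' : J + 1 - 1 - i = J - i := by omega
      rw [h']
      push_cast [hiJ]
      ring
    rw [← ENNReal.rpow_natCast (E (-(1/2))) i, E_rpow, E]
    congr 1
    rw [hc]
    ring
  rw [hreflect]
  have hle : ∑ i ∈ Finset.range (J+1), (E (-(1/2))) ^ i ≤ ∑' i : ℕ, (E (-(1/2))) ^ i :=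
    ENNReal.sum_le_tsum _
  have hgeo : ∑' i : ℕ, (E (-(1/2))) ^ i = (1 - E (-(1/2)))⁻¹ := ENNReal.tsum_geometric _
  -- E(-1/2) ≤ ofReal (3/4)
  have hval : E (-(1/2)) = ENNReal.ofReal ((2:ℝ) ^ (-(1/2):ℝ)) := by
    rw [E, ← ENNReal.ofReal_rpow_of_pos (by norm_num : (0:ℝ) < 2)]
    norm_num
  have hreal : (2:ℝ) ^ (-(1/2):ℝ) ≤ 3/4 := by
    set v := (2:ℝ) ^ (-(1/2):ℝ) with hv
    have hv0 : 0 ≤ v := Real.rpow_nonneg (by norm_num) _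
    have hv2 : v ^ (2:ℕ) = 2⁻¹ := by
      rw [hv, ← Real.rpow_natCast ((2:ℝ) ^ (-(1/2):ℝ)) 2, ← Real.rpow_mul (by norm_num)]
      norm_num
    nlinarith [hv2, hv0]
  have hr34 : E (-(1/2)) ≤ ENNReal.ofReal (3/4) := by
    rw [hval]
    exact ENNReal.ofReal_le_ofReal hreal
  have hsub : ENNReal.ofReal (1/4) ≤ 1 - E (-(1/2)) := by
    have h14 : ENNReal.ofReal (1/4) = 1 - ENNReal.ofReal (3/4) := by
      rw [← ENNReal.ofReal_one, ← ENNReal.ofReal_sub _ (by norm_num : (0:ℝ) ≤ 3/4)]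
      norm_num
    rw [h14]
    exact tsub_le_tsub_left hr34 1
  calc ∑ i ∈ Finset.range (J+1), (E (-(1/2))) ^ i ≤ (1 - E (-(1/2)))⁻¹ := hgeo ▸ hle
    _ ≤ (ENNReal.ofReal (1/4))⁻¹ := ENNReal.inv_le_inv' hsub
    _ = 4 := by
        rw [← ENNReal.ofReal_inv_of_pos (by norm_num)]
        norm_num

lemma geom_jensen {q γ : ℝ} (hq : 1 < q) (hγ : γ = (q-1)/2) (J : ℕ) (c' : ℕ → ℝ≥0∞) :
    (∑ i ∈ Finset.range (J+1), c' i) ^ q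
      ≤ E (2*(q-1)) * E ((J:ℝ)*γ) * ∑ i ∈ Finset.range (J+1), E (-(i:ℝ)*γ) * (c' i)^q := by
  set w : ℕ → ℝ≥0∞ := fun i => E (((i:ℝ)-(J:ℝ))/2 - 2) with hw
  have hwsum : ∑ i ∈ Finset.range (J+1), w i ≤ 1 := by
    have : ∀ i, w i = E (-2) * E (((i:ℝ)-(J:ℝ))/2) := by
      intro i
      rw [hw, ← E_add]
      congr 1
      ring
    calc ∑ i ∈ Finset.range (J+1), w i
        = E (-2) * ∑ i ∈ Finset.range (J+1), E (((i:ℝ)-(J:ℝ))/2) := by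
          rw [Finset.mul_sum]
          exact Finset.sum_congr rfl (fun i _ => this i)
      _ ≤ E (-2) * 4 := mul_le_mul_right (geom_sum_le J) _
      _ = E (-2) * E 2 := by
          congr 1
          rw [show ((4:ℝ≥0∞)) = ((2^2 : ℕ) : ℝ≥0∞) by norm_num, E_natCast]
          norm_num
      _ = 1 := by
          rw [← E_add]
          norm_num [E]
  set z : ℕ → ℝ≥0∞ := fun i => c' i * (w i)⁻¹ with hz
  have hwz : ∀ i, w i * z i = c' i := by
    intro i
    show w i * (c' i * (w i)⁻¹) = c' i
    rw [mul_comm (c' i), ← mul_assoc, ENNReal.mul_inv_cancel (E_ne_zero _) (E_ne_top _), one_mul]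
  have hjen := jensen_le_one (Finset.range (J+1)) w z hwsum (le_of_lt hq)
  have hlhs : ∑ i ∈ Finset.range (J+1), w i * z i = ∑ i ∈ Finset.range (J+1), c' i :=
    Finset.sum_congr rfl (fun i _ => hwz i)
  rw [hlhs] at hjen
  have hterm : ∀ i, w i * z i ^ q = E (2*(q-1)) * E ((J:ℝ)*γ) * (E (-(i:ℝ)*γ) * (c' i)^q) := by
    intro i
    rw [hz]
    rw [ENNReal.mul_rpow_of_nonneg _ _ (by linarith : (0:ℝ) ≤ q)]
    rw [hw, E_inv, E_rpow]
    calc E (((i:ℝ)-(J:ℝ))/2 - 2) * ((c' i)^q * E (-(((i:ℝ)-(J:ℝ))/2 - 2) * q))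
        = (E (((i:ℝ)-(J:ℝ))/2 - 2) * E (-(((i:ℝ)-(J:ℝ))/2 - 2) * q)) * (c' i)^q := by ring
      _ = E (2*(q-1) + (J:ℝ)*γ + (-(i:ℝ)*γ)) * (c' i)^q := by
          rw [← E_add]
          congr 1
          rw [hγ]
          ring
      _ = E (2*(q-1)) * E ((J:ℝ)*γ) * (E (-(i:ℝ)*γ) * (c' i)^q) := by
          rw [E_add, E_add]
          ring
  have heq : ∑ i ∈ Finset.range (J+1), w i * z i ^ q
      = E (2*(q-1)) * E ((J:ℝ)*γ) * ∑ i ∈ Finset.range (J+1), E (-(i:ℝ)*γ) * (c' i)^q := by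
    rw [Finset.mul_sum]
    exact Finset.sum_congr rfl (fun i _ => hterm i)
  exact le_trans hjen (le_of_eq heq)

lemma key_upper {p q α γ : ℝ} (hp : 1 < p) (hpq : p ≤ q) (hα : α = 1/p - 1/q)
    (hγ : γ = (q-1)/2) (a : ℕ → ℝ≥0∞) :
    ∑' n : ℕ, (((n:ℝ≥0∞)+1)⁻¹ * ∑ k ∈ Finset.Icc 1 (n+1), (k:ℝ≥0∞)^α * a k) ^ q
      ≤ (E (2*(q-1)) * ENNReal.ofReal ((2:ℝ)^(q-γ)/((q-γ)-1)) * E (α*q) * E ((2*p-1)*(q/p)))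
        * (∑' n : ℕ, (((n:ℝ≥0∞)+1)⁻¹ * ∑ k ∈ Finset.Icc 1 (n+1), a k) ^ p) ^ (q/p) := by
  have hq : 1 < q := lt_of_lt_of_le hp hpq
  have hp0 : (0:ℝ) < p := by linarith
  have hq0 : (0:ℝ) < q := by linarith
  have hα0 : 0 ≤ α := by
    rw [hα]
    have : 1/q ≤ 1/p := by
      apply div_le_div_of_nonneg_left (by norm_num) hp0 hpq
    linarith
  have hγ0 : (0:ℝ) < γ := by rw [hγ]; linarith
  have hs : 1 < q - γ := by rw [hγ]; linarith
  have hqp1 : 1 ≤ q/p := by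
    rw [le_div_iff₀ hp0]; linarith
  set c : ℕ → ℝ≥0∞ := fun i => ∑ k ∈ Finset.Ico ((2:ℕ)^i) (2^(i+1)), (k:ℝ≥0∞)^α * a k with hc
  set b : ℕ → ℝ≥0∞ := fun i => ∑ k ∈ Finset.Ico ((2:ℕ)^i) (2^(i+1)), a k with hb
  set G := ∑' n : ℕ, (((n:ℝ≥0∞)+1)⁻¹ * ∑ k ∈ Finset.Icc 1 (n+1), a k) ^ p with hG
  set Ks := (2:ℝ)^(q-γ)/((q-γ)-1) with hKs
  -- basic facts about the base x_n = n+1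
  have hxne : ∀ n : ℕ, ((n:ℝ≥0∞)+1) ≠ 0 := fun n => by
    have : (0:ℝ≥0∞) < (n:ℝ≥0∞)+1 := by
      apply lt_of_lt_of_le zero_lt_one
      simp
    exact this.ne'
  have hxnetop : ∀ n : ℕ, ((n:ℝ≥0∞)+1) ≠ ⊤ := fun n => by
    simp [ENNReal.add_ne_top]
  -- Step 1 : pointwise bound
  have step1 : ∀ n : ℕ,
      (((n:ℝ≥0∞)+1)⁻¹ * ∑ k ∈ Finset.Icc 1 (n+1), (k:ℝ≥0∞)^α * a k) ^ q
        ≤ E (2*(q-1)) * ∑' i : ℕ, (if 2^i ≤ n+1 then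
            ((n:ℝ≥0∞)+1)^(γ-q) * (E (-(i:ℝ)*γ) * (c i)^q) else 0) := by
    intro n
    set J := Nat.log2 (n+1) with hJ
    have h2Jle : 2^J ≤ n+1 := Nat.log2_self_le (by omega)
    have h1 : ∑ k ∈ Finset.Icc 1 (n+1), (k:ℝ≥0∞)^α * a k ≤ ∑ i ∈ Finset.range (J+1), c i := by
      have h1' := icc_le_dyadic (fun k => (k:ℝ≥0∞)^α * a k) (n+1) (by omega)
      rw [hJ]
      simpa using h1'
    have h2 : (((n:ℝ≥0∞)+1)⁻¹ * ∑ k ∈ Finset.Icc 1 (n+1), (k:ℝ≥0∞)^α * a k) ^ q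
        ≤ (((n:ℝ≥0∞)+1)⁻¹)^q * (∑ i ∈ Finset.range (J+1), c i) ^ q := by
      rw [← ENNReal.mul_rpow_of_nonneg _ _ (le_of_lt hq0)]
      exact ENNReal.rpow_le_rpow (mul_le_mul_right h1 _) (le_of_lt hq0)
    have h3 := geom_jensen hq hγ J c
    have hEJ : E ((J:ℝ)*γ) ≤ ((n:ℝ≥0∞)+1)^γ := by
      rw [← E_rpow]
      apply ENNReal.rpow_le_rpow _ (le_of_lt hγ0)
      rw [← E_natCast]
      have hcast : ((n:ℝ≥0∞)+1) = ((n+1:ℕ):ℝ≥0∞) := by push_cast; ring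
      rw [hcast]
      exact Nat.cast_le.mpr h2Jle
    have hinvq : (((n:ℝ≥0∞)+1)⁻¹)^q = ((n:ℝ≥0∞)+1)^(-q) := by
      rw [← ENNReal.rpow_neg_one, ← ENNReal.rpow_mul]
      norm_num
    have hcomb : ((n:ℝ≥0∞)+1)^(-q) * ((n:ℝ≥0∞)+1)^γ = ((n:ℝ≥0∞)+1)^(γ-q) := by
      rw [← ENNReal.rpow_add _ _ (hxne n) (hxnetop n)]
      congr 1
      ring
    calc (((n:ℝ≥0∞)+1)⁻¹ * ∑ k ∈ Finset.Icc 1 (n+1), (k:ℝ≥0∞)^α * a k) ^ q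
        ≤ (((n:ℝ≥0∞)+1)⁻¹)^q * (∑ i ∈ Finset.range (J+1), c i) ^ q := h2
      _ ≤ (((n:ℝ≥0∞)+1)⁻¹)^q *
            (E (2*(q-1)) * E ((J:ℝ)*γ) * ∑ i ∈ Finset.range (J+1), E (-(i:ℝ)*γ) * (c i)^q) :=
          mul_le_mul_right h3 _
      _ = E (2*(q-1)) * ((((n:ℝ≥0∞)+1)^(-q) * E ((J:ℝ)*γ)) *
            ∑ i ∈ Finset.range (J+1), E (-(i:ℝ)*γ) * (c i)^q) := by
          rw [hinvq]; ring
      _ ≤ E (2*(q-1)) * ((((n:ℝ≥0∞)+1)^(-q) * ((n:ℝ≥0∞)+1)^γ) *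
            ∑ i ∈ Finset.range (J+1), E (-(i:ℝ)*γ) * (c i)^q) := by
          apply mul_le_mul_right
          apply mul_le_mul_left
          exact mul_le_mul_right hEJ _
      _ = E (2*(q-1)) *
            ∑ i ∈ Finset.range (J+1), ((n:ℝ≥0∞)+1)^(γ-q) * (E (-(i:ℝ)*γ) * (c i)^q) := by
          rw [hcomb, Finset.mul_sum]
      _ ≤ E (2*(q-1)) * ∑' i : ℕ, (if 2^i ≤ n+1 then
            ((n:ℝ≥0∞)+1)^(γ-q) * (E (-(i:ℝ)*γ) * (c i)^q) else 0) := by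
          apply mul_le_mul_right
          have hmem : ∀ i ∈ Finset.range (J+1),
              ((n:ℝ≥0∞)+1)^(γ-q) * (E (-(i:ℝ)*γ) * (c i)^q)
                = (if 2^i ≤ n+1 then ((n:ℝ≥0∞)+1)^(γ-q) * (E (-(i:ℝ)*γ) * (c i)^q) else 0) := by
            intro i hi
            simp only [Finset.mem_range] at hi
            have : (2:ℕ)^i ≤ n+1 :=
              le_trans (Nat.pow_le_pow_right (by norm_num) (by omega)) h2Jle
            rw [if_pos this]
          rw [Finset.sum_congr rfl hmem]
          exact ENNReal.sum_le_tsum _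
  -- Step 2 : sum over n and swap
  have step2 : ∑' n : ℕ, (((n:ℝ≥0∞)+1)⁻¹ * ∑ k ∈ Finset.Icc 1 (n+1), (k:ℝ≥0∞)^α * a k) ^ q
      ≤ E (2*(q-1)) * ENNReal.ofReal Ks * ∑' i : ℕ, E ((i:ℝ)*(1-q)) * (c i)^q := by
    calc ∑' n : ℕ, (((n:ℝ≥0∞)+1)⁻¹ * ∑ k ∈ Finset.Icc 1 (n+1), (k:ℝ≥0∞)^α * a k) ^ q
        ≤ ∑' n : ℕ, E (2*(q-1)) * ∑' i : ℕ, (if 2^i ≤ n+1 then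
            ((n:ℝ≥0∞)+1)^(γ-q) * (E (-(i:ℝ)*γ) * (c i)^q) else 0) :=
          ENNReal.tsum_le_tsum step1
      _ = E (2*(q-1)) * ∑' n : ℕ, ∑' i : ℕ, (if 2^i ≤ n+1 then
            ((n:ℝ≥0∞)+1)^(γ-q) * (E (-(i:ℝ)*γ) * (c i)^q) else 0) := ENNReal.tsum_mul_left
      _ = E (2*(q-1)) * ∑' i : ℕ, ∑' n : ℕ, (if 2^i ≤ n+1 then
            ((n:ℝ≥0∞)+1)^(γ-q) * (E (-(i:ℝ)*γ) * (c i)^q) else 0) := by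
          rw [ENNReal.tsum_comm]
      _ = E (2*(q-1)) * ∑' i : ℕ, (E (-(i:ℝ)*γ) * (c i)^q) *
            ∑' n : ℕ, (if 2^i ≤ n+1 then ((n:ℝ≥0∞)+1)^(-(q-γ)) else 0) := by
          congr 1
          apply tsum_congr
          intro i
          rw [← ENNReal.tsum_mul_left]
          apply tsum_congr
          intro n
          by_cases h : 2^i ≤ n+1
          · simp only [h, if_true]
            rw [show γ - q = -(q-γ) by ring]
            ring
          · simp [h]
      _ ≤ E (2*(q-1)) * ∑' i : ℕ, (E (-(i:ℝ)*γ) * (c i)^q) *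
            (ENNReal.ofReal Ks * ((2^i : ℕ) : ℝ≥0∞)^(1-(q-γ))) := by
          apply mul_le_mul_right
          apply ENNReal.tsum_le_tsum
          intro i
          exact mul_le_mul_right (tail_bound hs (2^i) Nat.one_le_two_pow) _
      _ = E (2*(q-1)) * ENNReal.ofReal Ks * ∑' i : ℕ, E ((i:ℝ)*(1-q)) * (c i)^q := by
          rw [mul_assoc]
          congr 1
          rw [← ENNReal.tsum_mul_left]
          apply tsum_congr
          intro i
          rw [E_natCast, E_rpow]
          calc E (-(i:ℝ)*γ) * (c i)^q * (ENNReal.ofReal Ks * E ((i:ℝ)*(1-(q-γ))))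
              = ENNReal.ofReal Ks * (E (-(i:ℝ)*γ) * E ((i:ℝ)*(1-(q-γ))) * (c i)^q) := by ring
            _ = ENNReal.ofReal Ks * (E ((i:ℝ)*(1-q)) * (c i)^q) := by
                rw [← E_add]
                congr 2
                ring
  -- Step 3 : per-block estimate
  have step3 : ∀ i : ℕ, E ((i:ℝ)*(1-q)) * (c i)^q
      ≤ E (α*q) * (E ((i:ℝ)*(1-p)) * (b i)^p) ^ (q/p) := by
    intro i
    have hci : c i ≤ E (((i:ℝ)+1)*α) * b i := by
      rw [hc, hb, Finset.mul_sum]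
      apply Finset.sum_le_sum
      intro k hk
      simp only [Finset.mem_Ico] at hk
      apply mul_le_mul_left
      calc (k:ℝ≥0∞)^α ≤ (E ((i:ℝ)+1))^α := by
            apply ENNReal.rpow_le_rpow _ hα0
            have : ((i:ℝ)+1) = ((i+1:ℕ):ℝ) := by push_cast; ring
            rw [this, ← E_natCast]
            exact_mod_cast Nat.cast_le.mpr (le_of_lt hk.2)
        _ = E (((i:ℝ)+1)*α) := E_rpow _ _
    have hcq : (c i)^q ≤ E (((i:ℝ)+1)*α*q) * (b i)^q := by
      calc (c i)^q ≤ (E (((i:ℝ)+1)*α) * b i)^q := ENNReal.rpow_le_rpow hci (le_of_lt hq0)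
        _ = E (((i:ℝ)+1)*α*q) * (b i)^q := by
            rw [ENNReal.mul_rpow_of_nonneg _ _ (le_of_lt hq0), E_rpow]
    calc E ((i:ℝ)*(1-q)) * (c i)^q ≤ E ((i:ℝ)*(1-q)) * (E (((i:ℝ)+1)*α*q) * (b i)^q) :=
          mul_le_mul_right hcq _
      _ = E (α*q) * (E ((i:ℝ)*(1-p)*(q/p)) * (b i)^q) := by
          rw [← mul_assoc, ← E_add, ← mul_assoc, ← E_add]
          have hαq : α*q*p = q - p := by
            rw [hα]
            field_simp
          congr 2
          all_goals
            field_simp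
            linear_combination (i:ℝ) * hαq
      _ = E (α*q) * (E ((i:ℝ)*(1-p)) * (b i)^p) ^ (q/p) := by
          congr 1
          rw [ENNReal.mul_rpow_of_nonneg _ _ (by linarith : (0:ℝ) ≤ q/p), ← E_rpow]
          congr 1
          rw [← ENNReal.rpow_mul]
          congr 1
          field_simp
  -- Combine
  calc ∑' n : ℕ, (((n:ℝ≥0∞)+1)⁻¹ * ∑ k ∈ Finset.Icc 1 (n+1), (k:ℝ≥0∞)^α * a k) ^ q
      ≤ E (2*(q-1)) * ENNReal.ofReal Ks * ∑' i : ℕ, E ((i:ℝ)*(1-q)) * (c i)^q := step2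
    _ ≤ E (2*(q-1)) * ENNReal.ofReal Ks *
          ∑' i : ℕ, E (α*q) * (E ((i:ℝ)*(1-p)) * (b i)^p) ^ (q/p) :=
        mul_le_mul_right (ENNReal.tsum_le_tsum step3) _
    _ = E (2*(q-1)) * ENNReal.ofReal Ks * E (α*q) *
          ∑' i : ℕ, (E ((i:ℝ)*(1-p)) * (b i)^p) ^ (q/p) := by
        rw [ENNReal.tsum_mul_left, ← mul_assoc]
    _ ≤ E (2*(q-1)) * ENNReal.ofReal Ks * E (α*q) *
          (∑' i : ℕ, E ((i:ℝ)*(1-p)) * (b i)^p) ^ (q/p) :=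
        mul_le_mul_right (tsum_rpow_le _ hqp1) _
    _ ≤ E (2*(q-1)) * ENNReal.ofReal Ks * E (α*q) * (E (2*p-1) * G) ^ (q/p) := by
        apply mul_le_mul_right
        exact ENNReal.rpow_le_rpow (blocks_le_ces p hp a) (by linarith)
    _ = (E (2*(q-1)) * ENNReal.ofReal Ks * E (α*q) * E ((2*p-1)*(q/p))) * G ^ (q/p) := by
        rw [ENNReal.mul_rpow_of_nonneg _ _ (by linarith : (0:ℝ) ≤ q/p), E_rpow]
        ring

noncomputable def U (s : ℝ) (m : ℕ) : ℝ≥0∞ :=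
  ∑' n : ℕ, (if m ≤ n+1 then ((n:ℝ≥0∞)+1)⁻¹ else 0) ^ s

lemma ces_delta {s : ℝ} (hs : 0 < s) {m : ℕ} (hm : 1 ≤ m) (v : ℝ) :
    cesNorm s (fun k => if k = m then v else 0) = ENNReal.ofReal |v| * (U s m) ^ (1/s) := by
  have hinner : ∀ n : ℕ, ∑ k ∈ Finset.Icc 1 (n+1), ENNReal.ofReal |if k = m then v else 0|
      = if m ≤ n+1 then ENNReal.ofReal |v| else 0 := by
    intro n
    have : ∀ k, ENNReal.ofReal |if k = m then v else 0|
        = if k = m then ENNReal.ofReal |v| else 0 := by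
      intro k
      by_cases h : k = m <;> simp [h]
    rw [Finset.sum_congr rfl (fun k _ => this k), Finset.sum_ite_eq' (Finset.Icc 1 (n+1)) m]
    by_cases h : m ≤ n+1
    · rw [if_pos (by simp [Finset.mem_Icc]; omega), if_pos h]
    · rw [if_neg (by simp [Finset.mem_Icc]; omega), if_neg h]
  have hterm : ∀ n : ℕ, (((n : ℝ≥0∞) + 1)⁻¹ * (if m ≤ n+1 then ENNReal.ofReal |v| else 0)) ^ s
      = (ENNReal.ofReal |v|) ^ s * ((if m ≤ n+1 then ((n:ℝ≥0∞)+1)⁻¹ else 0)) ^ s := by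
    intro n
    by_cases h : m ≤ n+1
    · simp only [h, if_true]
      rw [← ENNReal.mul_rpow_of_nonneg _ _ (le_of_lt hs)]
      ring_nf
    · simp only [h, if_false]
      rw [mul_zero, ENNReal.zero_rpow_of_pos hs, mul_zero]
  unfold cesNorm U
  calc (∑' n : ℕ, (((n : ℝ≥0∞) + 1)⁻¹
          * ∑ k ∈ Finset.Icc 1 (n + 1), ENNReal.ofReal |if k = m then v else 0|) ^ s) ^ (1/s)
      = (∑' n : ℕ, (ENNReal.ofReal |v|) ^ s
          * ((if m ≤ n+1 then ((n:ℝ≥0∞)+1)⁻¹ else 0)) ^ s) ^ (1/s) := by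
        congr 1
        apply tsum_congr
        intro n
        rw [hinner n, hterm n]
    _ = ((ENNReal.ofReal |v|) ^ s * ∑' n : ℕ,
          ((if m ≤ n+1 then ((n:ℝ≥0∞)+1)⁻¹ else 0)) ^ s) ^ (1/s) := by
        rw [ENNReal.tsum_mul_left]
    _ = ENNReal.ofReal |v| * (∑' n : ℕ,
          ((if m ≤ n+1 then ((n:ℝ≥0∞)+1)⁻¹ else 0)) ^ s) ^ (1/s) := by
        rw [ENNReal.mul_rpow_of_nonneg _ _ (by positivity : (0:ℝ) ≤ 1/s), ← ENNReal.rpow_mul]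
        congr 2
        field_simp
        exact ENNReal.rpow_one _
lemma U_upper {s : ℝ} (hs : 1 < s) {m : ℕ} (hm : 1 ≤ m) :
    U s m ≤ ENNReal.ofReal ((2:ℝ)^s/(s-1)) * (m:ℝ≥0∞)^(1-s) := by
  have : ∀ n : ℕ, ((if m ≤ n+1 then ((n:ℝ≥0∞)+1)⁻¹ else 0)) ^ s
      = (if m ≤ n+1 then ((n:ℝ≥0∞)+1)^(-s) else 0) := by
    intro n
    by_cases h : m ≤ n+1
    · simp only [h, if_true]
      rw [← ENNReal.rpow_neg_one, ← ENNReal.rpow_mul]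
      norm_num
    · simp only [h, if_false]
      exact ENNReal.zero_rpow_of_pos (by linarith)
  unfold U
  rw [tsum_congr this]
  exact tail_bound hs m hm

lemma U_lower {s : ℝ} (hs : 0 < s) {m : ℕ} (hm : 1 ≤ m) :
    (m:ℝ≥0∞) * (((2*m:ℕ)):ℝ≥0∞)^(-s) ≤ U s m := by
  have hterm : ∀ n ∈ Finset.Ico (m-1) (2*m-1),
      (((2*m:ℕ)):ℝ≥0∞)^(-s) ≤ ((if m ≤ n+1 then ((n:ℝ≥0∞)+1)⁻¹ else 0)) ^ s := by
    intro n hn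
    simp only [Finset.mem_Ico] at hn
    have h1 : m ≤ n+1 := by omega
    rw [if_pos h1]
    rw [← ENNReal.rpow_neg_one ((n:ℝ≥0∞)+1), ← ENNReal.rpow_mul]
    rw [show (-1 : ℝ) * s = -s by ring]
    have hbase : ((n:ℝ≥0∞)+1) ≤ (((2*m:ℕ)):ℝ≥0∞) := by
      have : ((n:ℝ≥0∞)+1) = ((n+1:ℕ):ℝ≥0∞) := by push_cast; ring
      rw [this]
      exact Nat.cast_le.mpr (by omega)
    rw [ENNReal.rpow_neg, ENNReal.rpow_neg]
    exact ENNReal.inv_le_inv' (ENNReal.rpow_le_rpow hbase (le_of_lt hs))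
  have hcard : (Finset.Ico (m-1) (2*m-1)).card = m := by
    rw [Nat.card_Ico]
    omega
  calc (m:ℝ≥0∞) * (((2*m:ℕ)):ℝ≥0∞)^(-s)
      = (Finset.Ico (m-1) (2*m-1)).card • ((((2*m:ℕ)):ℝ≥0∞)^(-s)) := by
        rw [hcard, nsmul_eq_mul]
    _ ≤ ∑ n ∈ Finset.Ico (m-1) (2*m-1), ((if m ≤ n+1 then ((n:ℝ≥0∞)+1)⁻¹ else 0)) ^ s :=
        Finset.card_nsmul_le_sum _ _ _ hterm
    _ ≤ U s m := ENNReal.sum_le_tsum _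

lemma lower_est {p q : ℝ} (hp : 1 < p) (hpq : p ≤ q) :
    ∃ c : ℝ, 0 < c ∧ ∀ (z : ℕ → ℝ) (n : ℕ),
      ENNReal.ofReal c * ENNReal.ofReal (((n:ℝ)+1)^(1/q-1/p) * |z (n+1)|)
        ≤ ⨆ (x : ℕ → ℝ) (_ : cesNorm p x ≤ 1), cesNorm q (fun k => z k * x k) := by
  have hq : 1 < q := lt_of_lt_of_le hp hpq
  have hp0 : (0:ℝ) < p := by linarith
  have hq0 : (0:ℝ) < q := by linarith
  set Kp := (2:ℝ)^p/(p-1) with hKp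
  have hKp0 : 0 < Kp := div_pos (Real.rpow_pos_of_pos (by norm_num) _) (by linarith)
  refine ⟨Kp^(-(1/p))/2, by positivity, ?_⟩
  intro z n
  set m := n+1 with hmdef
  have hm : 1 ≤ m := by omega
  set mr := ((n:ℝ)+1) with hmr
  have hmr0 : (0:ℝ) < mr := by positivity
  have hmrm : mr = (m:ℝ) := by rw [hmr, hmdef]; push_cast; ring
  set t := Kp^(-(1/p)) * mr^((p-1)/p) with htdef
  have ht0 : 0 < t := by positivity
  set x : ℕ → ℝ := fun k => if k = m then t else 0 with hx
  -- cesNorm p x ≤ 1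
  have hcast : (m:ℝ≥0∞) = ENNReal.ofReal mr := by
    rw [hmrm, ENNReal.ofReal_natCast]
  have hx1 : cesNorm p x ≤ 1 := by
    rw [hx, ces_delta hp0 hm t]
    have hU : (U p m) ^ (1/p) ≤ (ENNReal.ofReal Kp * (m:ℝ≥0∞)^(1-p)) ^ (1/p) :=
      ENNReal.rpow_le_rpow (U_upper hp hm) (by positivity)
    have hrw : (ENNReal.ofReal Kp * (m:ℝ≥0∞)^(1-p)) ^ (1/p)
        = ENNReal.ofReal (Kp^(1/p)) * ENNReal.ofReal (mr^((1-p)/p)) := by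
      rw [ENNReal.mul_rpow_of_nonneg _ _ (by positivity : (0:ℝ) ≤ 1/p)]
      congr 1
      · rw [ENNReal.ofReal_rpow_of_pos hKp0]
      · rw [hcast, ENNReal.ofReal_rpow_of_pos hmr0, ENNReal.ofReal_rpow_of_pos (by positivity),
          ← Real.rpow_mul (le_of_lt hmr0)]
        congr 1
        field_simp
    calc ENNReal.ofReal |t| * (U p m) ^ (1/p)
        ≤ ENNReal.ofReal |t| * (ENNReal.ofReal (Kp^(1/p)) * ENNReal.ofReal (mr^((1-p)/p))) := by
          rw [← hrw]; exact mul_le_mul_right hU _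
      _ = ENNReal.ofReal (|t| * (Kp^(1/p) * mr^((1-p)/p))) := by
          rw [ENNReal.ofReal_mul (abs_nonneg t), ENNReal.ofReal_mul (by positivity)]
      _ = 1 := by
          rw [abs_of_pos ht0, htdef]
          have e1 : Kp^(-(1/p)) * mr^((p-1)/p) * (Kp^(1/p) * mr^((1-p)/p))
              = (Kp^(-(1/p)) * Kp^(1/p)) * (mr^((p-1)/p) * mr^((1-p)/p)) := by ring
          rw [e1, ← Real.rpow_add hKp0, ← Real.rpow_add hmr0]
          rw [show -(1/p) + 1/p = 0 by ring,
            show (p-1)/p + (1-p)/p = 0 by rw [← add_div, show p-1+(1-p) = 0 by ring, zero_div],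
            Real.rpow_zero, Real.rpow_zero, mul_one]
          norm_num
  -- the product z * x is a delta at m
  have hfun : (fun k => z k * x k) = fun k => if k = m then z m * t else 0 := by
    funext k
    rw [hx]
    by_cases h : k = m
    · subst h; simp
    · simp [h]
  -- lower bound for cesNorm q (z * x)
  have habs : |z m * t| = |z m| * t := by
    rw [abs_mul, abs_of_pos ht0]
  have h2m : (((2*m:ℕ)):ℝ≥0∞) = ENNReal.ofReal (2*mr) := by
    rw [ENNReal.ofReal_mul (by norm_num), hmrm, ENNReal.ofReal_natCast, ENNReal.ofReal_ofNat]
    push_cast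
    ring
  have hlowU : ENNReal.ofReal (mr * (2*mr)^(-q)) ≤ U q m := by
    have := U_lower hq0 hm
    refine le_trans (le_of_eq ?_) this
    rw [hcast, h2m, ENNReal.ofReal_rpow_of_pos (by positivity), ← ENNReal.ofReal_mul (le_of_lt hmr0)]
  have hces : ENNReal.ofReal (|z m| * t * (mr * (2*mr)^(-q))^(1/q))
      ≤ cesNorm q (fun k => z k * x k) := by
    rw [hfun, ces_delta hq0 hm, habs]
    calc ENNReal.ofReal (|z m| * t * (mr * (2*mr)^(-q))^(1/q))
        = ENNReal.ofReal (|z m| * t) * ENNReal.ofReal ((mr * (2*mr)^(-q))^(1/q)) := by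
          rw [ENNReal.ofReal_mul (by positivity)]
      _ ≤ ENNReal.ofReal (|z m| * t) * (U q m) ^ (1/q) := by
          apply mul_le_mul_right
          rw [← ENNReal.ofReal_rpow_of_pos (by positivity)]
          exact ENNReal.rpow_le_rpow hlowU (by positivity)
  refine le_trans ?_ (le_iSup₂_of_le x hx1 hces)
  rw [← ENNReal.ofReal_mul (by positivity)]
  apply ENNReal.ofReal_le_ofReal
  -- real computation
  have hqne : q ≠ 0 := ne_of_gt hq0
  have e3 : (mr * (2*mr)^(-q))^(1/q) = mr^(1/q) * (2*mr)^(-(1:ℝ)) := by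
    rw [Real.mul_rpow (le_of_lt hmr0) (Real.rpow_nonneg (by positivity) _),
      ← Real.rpow_mul (by positivity : (0:ℝ) ≤ 2*mr)]
    congr 1
    field_simp
  rw [e3]
  have e4 : (2*mr)^(-(1:ℝ)) = 2⁻¹ * mr^(-(1:ℝ)) := by
    rw [Real.rpow_neg_one, Real.rpow_neg_one, mul_inv]
  rw [e4, htdef]
  apply le_of_eq
  have e5 : mr^((p-1)/p) * mr^(1/q) * mr^(-(1:ℝ)) = mr^(1/q - 1/p) := by
    rw [← Real.rpow_add hmr0, ← Real.rpow_add hmr0]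
    congr 1
    field_simp
    ring
  calc Kp^(-(1/p))/2 * (mr^(1/q-1/p) * |z m|)
      = Kp^(-(1/p)) * (mr^((p-1)/p) * mr^(1/q) * mr^(-(1:ℝ))) * |z m| / 2 := by rw [e5]; ring
    _ = |z m| * (Kp^(-(1/p)) * mr^((p-1)/p)) * (mr^(1/q) * (2⁻¹ * mr^(-(1:ℝ)))) := by ring

/-- Bennett's identification `M(ces_p, ces_q) = ℓ_∞(n^{1/q−1/p})` for `1 < p ≤ q < ∞`. -/
theorem stmt_14 (p q : ℝ) (hp : 1 < p) (hpq : p ≤ q) :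
    ∃ c C : ℝ, 0 < c ∧ 0 < C ∧ ∀ z : ℕ → ℝ,
      ENNReal.ofReal c *
          (⨆ n : ℕ, ENNReal.ofReal (((n : ℝ) + 1) ^ (1 / q - 1 / p) * |z (n + 1)|)) ≤
        (⨆ (x : ℕ → ℝ) (_ : cesNorm p x ≤ 1), cesNorm q (fun n => z n * x n)) ∧
      (⨆ (x : ℕ → ℝ) (_ : cesNorm p x ≤ 1), cesNorm q (fun n => z n * x n)) ≤
        ENNReal.ofReal C *
          (⨆ n : ℕ, ENNReal.ofReal (((n : ℝ) + 1) ^ (1 / q - 1 / p) * |z (n + 1)|)) := by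
  obtain ⟨c, hc0, hcest⟩ := lower_est hp hpq
  have hq : 1 < q := lt_of_lt_of_le hp hpq
  have hp0 : (0:ℝ) < p := by linarith
  have hq0 : (0:ℝ) < q := by linarith
  have hqne : q ≠ 0 := ne_of_gt hq0
  set α := 1/p - 1/q with hα
  have hα0 : 0 ≤ α := by
    rw [hα]
    have : 1/q ≤ 1/p := div_le_div_of_nonneg_left (by norm_num) hp0 hpq
    linarith
  set γ := (q-1)/2 with hγ
  have hKs0 : 0 < (2:ℝ)^(q-γ)/((q-γ)-1) := by
    apply div_pos (Real.rpow_pos_of_pos (by norm_num) _)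
    rw [hγ]; linarith
  set Ckey : ℝ≥0∞ :=
    E (2*(q-1)) * ENNReal.ofReal ((2:ℝ)^(q-γ)/((q-γ)-1)) * E (α*q) * E ((2*p-1)*(q/p))
    with hCkey
  have hCkey_top : Ckey ≠ ⊤ := by
    rw [hCkey]
    exact ENNReal.mul_ne_top (ENNReal.mul_ne_top (ENNReal.mul_ne_top (E_ne_top _)
      ENNReal.ofReal_ne_top) (E_ne_top _)) (E_ne_top _)
  have hCkey0 : Ckey ≠ 0 := by
    rw [hCkey]
    apply mul_ne_zero (mul_ne_zero (mul_ne_zero (E_ne_zero _) _) (E_ne_zero _)) (E_ne_zero _)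
    simp [ENNReal.ofReal_eq_zero]
    linarith
  set Cq := Ckey ^ (1/q) with hCq
  have hCq_top : Cq ≠ ⊤ := ENNReal.rpow_ne_top_of_nonneg (by positivity) hCkey_top
  have hCq0 : Cq ≠ 0 := by
    rw [hCq]
    simp [ENNReal.rpow_eq_zero_iff, hCkey0, hCkey_top]
  refine ⟨c, Cq.toReal, hc0, ENNReal.toReal_pos hCq0 hCq_top, ?_⟩
  intro z
  constructor
  · -- lower bound
    rw [ENNReal.mul_iSup]
    exact iSup_le fun n => hcest z n
  · -- upper bound
    set W := ⨆ n : ℕ, ENNReal.ofReal (((n : ℝ) + 1) ^ (1 / q - 1 / p) * |z (n + 1)|) with hW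
    by_cases hWtop : W = ⊤
    · rw [hWtop, ENNReal.mul_top]
      · exact le_top
      · simp only [ne_eq, ENNReal.ofReal_eq_zero, not_le]
        exact ENNReal.toReal_pos hCq0 hCq_top
    · set Wr := W.toReal with hWr
      have hWr0 : 0 ≤ Wr := ENNReal.toReal_nonneg
      have hzb : ∀ k : ℕ, 1 ≤ k → |z k| ≤ Wr * (k:ℝ)^α := by
        intro k hk
        have hkpos : (0:ℝ) < (k:ℝ) := by exact_mod_cast hk
        have h1 : ENNReal.ofReal ((((k-1:ℕ):ℝ)+1)^(1/q-1/p) * |z ((k-1)+1)|) ≤ W :=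
          le_iSup (fun n : ℕ => ENNReal.ofReal (((n : ℝ) + 1) ^ (1 / q - 1 / p) * |z (n + 1)|))
            (k-1)
        have hk1 : ((k-1:ℕ):ℝ)+1 = (k:ℝ) := by
          have : k - 1 + 1 = k := by omega
          rw [show ((k-1:ℕ):ℝ) + 1 = ((k-1+1:ℕ):ℝ) by push_cast; ring, this]
        have hk2 : (k-1)+1 = k := by omega
        rw [hk1, hk2] at h1
        have h2 : (k:ℝ)^(1/q-1/p) * |z k| ≤ Wr :=
          (ENNReal.ofReal_le_iff_le_toReal hWtop).mp h1
        have h3 : |z k| = (k:ℝ)^α * ((k:ℝ)^(1/q-1/p) * |z k|) := by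
          rw [← mul_assoc, ← Real.rpow_add hkpos, hα]
          norm_num
        rw [h3]
        calc (k:ℝ)^α * ((k:ℝ)^(1/q-1/p) * |z k|) ≤ (k:ℝ)^α * Wr :=
              mul_le_mul_of_nonneg_left h2 (Real.rpow_nonneg (le_of_lt hkpos) _)
          _ = Wr * (k:ℝ)^α := by ring
      apply iSup_le; intro x; apply iSup_le; intro hx
      set a : ℕ → ℝ≥0∞ := fun k => ENNReal.ofReal |x k| with ha
      set G := ∑' n : ℕ, (((n:ℝ≥0∞)+1)⁻¹ * ∑ k ∈ Finset.Icc 1 (n+1), a k) ^ p with hG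
      have hG1 : G ≤ 1 := by
        have hces : G ^ (1/p) ≤ 1 := hx
        have h := ENNReal.rpow_le_rpow hces (le_of_lt hp0)
        rw [← ENNReal.rpow_mul, ENNReal.one_rpow] at h
        rw [show 1/p*p = 1 by field_simp, ENNReal.rpow_one] at h
        exact h
      have hGqp : G ^ (q/p) ≤ 1 := ENNReal.rpow_le_one hG1 (by positivity)
      -- pointwise comparison of the summands
      have hpoint : ∀ n : ℕ,
          (((n:ℝ≥0∞)+1)⁻¹ * ∑ k ∈ Finset.Icc 1 (n+1), ENNReal.ofReal |z k * x k|) ^ q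
            ≤ (ENNReal.ofReal Wr) ^ q *
              (((n:ℝ≥0∞)+1)⁻¹ * ∑ k ∈ Finset.Icc 1 (n+1), (k:ℝ≥0∞)^α * a k) ^ q := by
        intro n
        have hinner : ∑ k ∈ Finset.Icc 1 (n+1), ENNReal.ofReal |z k * x k|
            ≤ ENNReal.ofReal Wr * ∑ k ∈ Finset.Icc 1 (n+1), (k:ℝ≥0∞)^α * a k := by
          rw [Finset.mul_sum]
          apply Finset.sum_le_sum
          intro k hk
          have hk1 : 1 ≤ k := (Finset.mem_Icc.mp hk).1
          have hkpos : (0:ℝ) < (k:ℝ) := by exact_mod_cast hk1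
          have hkk : ENNReal.ofReal ((k:ℝ)^α) = (k:ℝ≥0∞)^α := by
            rw [← ENNReal.ofReal_rpow_of_pos hkpos, ENNReal.ofReal_natCast]
          calc ENNReal.ofReal |z k * x k| = ENNReal.ofReal (|z k| * |x k|) := by rw [abs_mul]
            _ ≤ ENNReal.ofReal ((Wr * (k:ℝ)^α) * |x k|) :=
                ENNReal.ofReal_le_ofReal
                  (mul_le_mul_of_nonneg_right (hzb k hk1) (abs_nonneg _))
            _ = ENNReal.ofReal Wr * ((k:ℝ≥0∞)^α * a k) := by
                rw [mul_assoc, ENNReal.ofReal_mul hWr0,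
                  ENNReal.ofReal_mul (Real.rpow_nonneg (le_of_lt hkpos) _), hkk, ha]
        calc (((n:ℝ≥0∞)+1)⁻¹ * ∑ k ∈ Finset.Icc 1 (n+1), ENNReal.ofReal |z k * x k|) ^ q
            ≤ (((n:ℝ≥0∞)+1)⁻¹ *
                (ENNReal.ofReal Wr * ∑ k ∈ Finset.Icc 1 (n+1), (k:ℝ≥0∞)^α * a k)) ^ q :=
              ENNReal.rpow_le_rpow (mul_le_mul_right hinner _) (le_of_lt hq0)
          _ = (ENNReal.ofReal Wr *
                (((n:ℝ≥0∞)+1)⁻¹ * ∑ k ∈ Finset.Icc 1 (n+1), (k:ℝ≥0∞)^α * a k)) ^ q := by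
              ring_nf
          _ = (ENNReal.ofReal Wr) ^ q *
                (((n:ℝ≥0∞)+1)⁻¹ * ∑ k ∈ Finset.Icc 1 (n+1), (k:ℝ≥0∞)^α * a k) ^ q :=
              ENNReal.mul_rpow_of_nonneg _ _ (le_of_lt hq0)
      have hkey := key_upper hp hpq hα hγ a
      have hmain : cesNorm q (fun n => z n * x n) ≤ ENNReal.ofReal Wr * Cq := by
        show (∑' n : ℕ, (((n:ℝ≥0∞)+1)⁻¹
            * ∑ k ∈ Finset.Icc 1 (n+1), ENNReal.ofReal |z k * x k|) ^ q) ^ (1/q)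
          ≤ ENNReal.ofReal Wr * Cq
        have hF : ∑' n : ℕ, (((n:ℝ≥0∞)+1)⁻¹
            * ∑ k ∈ Finset.Icc 1 (n+1), ENNReal.ofReal |z k * x k|) ^ q
            ≤ (ENNReal.ofReal Wr) ^ q * Ckey := by
          calc ∑' n : ℕ, (((n:ℝ≥0∞)+1)⁻¹
              * ∑ k ∈ Finset.Icc 1 (n+1), ENNReal.ofReal |z k * x k|) ^ q
              ≤ ∑' n : ℕ, (ENNReal.ofReal Wr) ^ q *
                (((n:ℝ≥0∞)+1)⁻¹ * ∑ k ∈ Finset.Icc 1 (n+1), (k:ℝ≥0∞)^α * a k) ^ q :=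
                ENNReal.tsum_le_tsum hpoint
            _ = (ENNReal.ofReal Wr) ^ q * ∑' n : ℕ,
                (((n:ℝ≥0∞)+1)⁻¹ * ∑ k ∈ Finset.Icc 1 (n+1), (k:ℝ≥0∞)^α * a k) ^ q :=
                ENNReal.tsum_mul_left
            _ ≤ (ENNReal.ofReal Wr) ^ q * (Ckey * G ^ (q/p)) := by
                apply mul_le_mul_right
                exact hkey
            _ ≤ (ENNReal.ofReal Wr) ^ q * (Ckey * 1) :=
                mul_le_mul_right (mul_le_mul_right hGqp _) _
            _ = (ENNReal.ofReal Wr) ^ q * Ckey := by rw [mul_one]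
        calc (∑' n : ℕ, (((n:ℝ≥0∞)+1)⁻¹
            * ∑ k ∈ Finset.Icc 1 (n+1), ENNReal.ofReal |z k * x k|) ^ q) ^ (1/q)
            ≤ ((ENNReal.ofReal Wr) ^ q * Ckey) ^ (1/q) :=
              ENNReal.rpow_le_rpow hF (by positivity)
          _ = ENNReal.ofReal Wr * Cq := by
              rw [ENNReal.mul_rpow_of_nonneg _ _ (by positivity : (0:ℝ) ≤ 1/q),
                ← ENNReal.rpow_mul, show q * (1/q) = 1 by field_simp, ENNReal.rpow_one, hCq]
      calc cesNorm q (fun n => z n * x n) ≤ ENNReal.ofReal Wr * Cq := hmain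
        _ = ENNReal.ofReal Cq.toReal * W := by
            rw [hWr, ENNReal.ofReal_toReal hWtop, ENNReal.ofReal_toReal hCq_top, mul_comm]
end

section
/- Let 1 < q < p < ∞ and let r satisfy 1/r = 1/q − 1/p. There exist constants c, C > 0, depending only on p and q, such that for every real sequence z = (z_n)_{n≥1}: c · ‖z‖_{τℓ_r} ≤ sup{ ‖z·x‖_{τℓ_q} : x a real sequence with ‖x‖_{τℓ_p} ≤ 1 } ≤ C · ‖z‖_{τℓ_r}, where z·x denotes the coordinatewise product and all quantities take values in [0,∞]. -/
open ENNReal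

namespace Stmt16

open MeasureTheory NNReal

lemma ofReal_abs (t : ℝ) : ENNReal.ofReal |t| = (‖t‖₊ : ℝ≥0∞) := by
  rw [← Real.norm_eq_abs]; exact ENNReal.ofReal_eq_coe_nnreal (norm_nonneg t)

/-- Truncated tail supremum. -/
noncomputable def csup (z : ℕ → ℝ) (N n : ℕ) : ℝ≥0 :=
  (Finset.Ioc n N).sup fun j => ‖z j‖₊

lemma csup_mono (z : ℕ → ℝ) (n : ℕ) : Monotone (fun N => csup z N n) :=
  fun _ _ h => Finset.sup_mono (Finset.Ioc_subset_Ioc_right h)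

lemma csup_le_bsup (z : ℕ → ℝ) (N n : ℕ) :
    (csup z N n : ℝ≥0∞) ≤ ⨆ (k) (_ : n + 1 ≤ k), ENNReal.ofReal |z k| := by
  rcases lt_or_ge n N with h | h
  · obtain ⟨j, hj, hje⟩ := Finset.exists_mem_eq_sup (Finset.Ioc n N)
      ⟨n + 1, Finset.mem_Ioc.mpr ⟨Nat.lt_succ_self n, h⟩⟩ (fun j => ‖z j‖₊)
    rw [csup, hje, ← ofReal_abs]
    exact le_iSup₂ (f := fun k (_ : n + 1 ≤ k) => ENNReal.ofReal |z k|) j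
      (Finset.mem_Ioc.mp hj).1
  · rw [csup, Finset.Ioc_eq_empty (by omega)]
    simp

lemma bsup_eq (z : ℕ → ℝ) (n : ℕ) :
    (⨆ (k) (_ : n + 1 ≤ k), ENNReal.ofReal |z k|) = ⨆ N, (csup z N n : ℝ≥0∞) := by
  refine le_antisymm (iSup₂_le fun k hk => ?_) (iSup_le fun N => csup_le_bsup z N n)
  have h1 : ENNReal.ofReal |z k| ≤ (csup z k n : ℝ≥0∞) := by
    rw [ofReal_abs, ENNReal.coe_le_coe, csup]
    exact Finset.le_sup (f := fun j => ‖z j‖₊) (Finset.mem_Ioc.mpr ⟨hk, le_refl k⟩)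
  exact h1.trans (le_iSup (fun N => (csup z N n : ℝ≥0∞)) k)

lemma iSup_rpow {ι : Sort*} {r : ℝ} (hr0 : 0 < r) (u : ι → ℝ≥0∞) :
    (⨆ i, u i) ^ r = ⨆ i, (u i) ^ r := by
  refine le_antisymm (le_of_forall_lt fun t ht => ?_)
    (iSup_le fun i => ENNReal.rpow_le_rpow (le_iSup u i) hr0.le)
  have h1 : t ^ (1 / r) < ⨆ i, u i := by
    have := ENNReal.rpow_lt_rpow ht (one_div_pos.mpr hr0)
    rwa [← ENNReal.rpow_mul, mul_one_div_cancel hr0.ne', ENNReal.rpow_one] at this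
  obtain ⟨i, hi⟩ := lt_iSup_iff.mp h1
  have h2 : (t ^ (1 / r)) ^ r < (u i) ^ r := ENNReal.rpow_lt_rpow hi hr0
  rw [← ENNReal.rpow_mul, one_div_mul_cancel hr0.ne', ENNReal.rpow_one] at h2
  exact h2.trans_le (le_iSup (fun i => (u i) ^ r) i)

section Facts

variable {p q r : ℝ} (hq : 1 < q) (hqp : q < p) (hrr : 1 / r = 1 / q - 1 / p)

include hq hqp hrr

lemma hq0 : 0 < q := lt_trans one_pos hq
lemma hp0 : 0 < p := lt_trans (hq0 hq hqp hrr) hqp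
lemma hr0 : 0 < r := by
  have h1 : 1 / p < 1 / q := one_div_lt_one_div_of_lt (hq0 hq hqp hrr) hqp
  have : 0 < 1 / r := by rw [hrr]; linarith
  exact one_div_pos.mp this
lemma hqr : q < r := by
  have h2 : 1 / r < 1 / q := by
    rw [hrr]; have := one_div_pos.mpr (hp0 hq hqp hrr); linarith
  exact lt_of_one_div_lt_one_div (hr0 hq hqp hrr) h2
lemma idE : 1 / q = 1 / r + 1 / p := by rw [hrr]; ring
lemma idB : 1 + r / p = r / q := by
  have hp' := (hp0 hq hqp hrr).ne'
  have hq' := (hq0 hq hqp hrr).ne'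
  have hr' := (hr0 hq hqp hrr).ne'
  field_simp at hrr ⊢
  nlinarith [hrr]
lemma idF : q / r + q / p = 1 := by
  have hp' := (hp0 hq hqp hrr).ne'
  have hq' := (hq0 hq hqp hrr).ne'
  have hr' := (hr0 hq hqp hrr).ne'
  field_simp at hrr ⊢
  nlinarith [hrr]

end Facts

lemma holder {p q r : ℝ} (hq : 1 < q) (hqp : q < p) (hrr : 1 / r = 1 / q - 1 / p)
    (f g : ℕ → ℝ≥0∞) :
    (∑' n, (f n * g n) ^ q) ^ (1 / q) ≤
      (∑' n, f n ^ r) ^ (1 / r) * (∑' n, g n ^ p) ^ (1 / p) := by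
  have h := ENNReal.lintegral_Lp_mul_le_Lq_mul_Lr (p := q) (q := r) (r := p)
    (hq0 hq hqp hrr) (hqr hq hqp hrr) (idE hq hqp hrr) Measure.count
    (f := f) (g := g) (measurable_of_countable _).aemeasurable
    (measurable_of_countable _).aemeasurable
  simpa [lintegral_count, Pi.mul_apply] using h

lemma upper {p q r : ℝ} (hq : 1 < q) (hqp : q < p) (hrr : 1 / r = 1 / q - 1 / p)
    (z x : ℕ → ℝ) :
    tlNorm q (fun n => z n * x n) ≤ tlNorm r z * tlNorm p x := by
  have hq0' := hq0 hq hqp hrr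
  have key : ∀ n : ℕ, (⨆ (k) (_ : n + 1 ≤ k), ENNReal.ofReal |z k * x k|) ≤
      (⨆ (k) (_ : n + 1 ≤ k), ENNReal.ofReal |z k|) *
        (⨆ (k) (_ : n + 1 ≤ k), ENNReal.ofReal |x k|) := by
    intro n
    refine iSup₂_le fun k hk => ?_
    rw [abs_mul, ENNReal.ofReal_mul (abs_nonneg _)]
    exact mul_le_mul'
      (le_iSup₂ (f := fun k (_ : n + 1 ≤ k) => ENNReal.ofReal |z k|) k hk)
      (le_iSup₂ (f := fun k (_ : n + 1 ≤ k) => ENNReal.ofReal |x k|) k hk)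
  calc tlNorm q (fun n => z n * x n)
      = (∑' n : ℕ, (⨆ (k) (_ : n + 1 ≤ k), ENNReal.ofReal |z k * x k|) ^ q) ^ (1 / q) := rfl
    _ ≤ (∑' n : ℕ, ((⨆ (k) (_ : n + 1 ≤ k), ENNReal.ofReal |z k|) *
          (⨆ (k) (_ : n + 1 ≤ k), ENNReal.ofReal |x k|)) ^ q) ^ (1 / q) := by
        refine ENNReal.rpow_le_rpow ?_ (one_div_nonneg.mpr hq0'.le)
        exact Summable.tsum_le_tsum (fun n => ENNReal.rpow_le_rpow (key n) hq0'.le)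
          ENNReal.summable ENNReal.summable
    _ ≤ tlNorm r z * tlNorm p x := holder hq hqp hrr _ _

lemma lower_step {p q r : ℝ} (hq : 1 < q) (hqp : q < p) (hrr : 1 / r = 1 / q - 1 / p)
    (z : ℕ → ℝ) (N : ℕ) :
    (∑ n ∈ Finset.range N, (csup z N n : ℝ≥0∞) ^ r) ^ (1 / r) ≤
      ⨆ (x : ℕ → ℝ) (_ : tlNorm p x ≤ 1), tlNorm q (fun n => z n * x n) := by
  have hq0' := hq0 hq hqp hrr
  have hp0' := hp0 hq hqp hrr
  have hr0' := hr0 hq hqp hrr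
  set S : ℝ≥0∞ := ∑ n ∈ Finset.range N, (csup z N n : ℝ≥0∞) ^ r with hSdef
  have hS_top : S ≠ ⊤ := by
    refine (ENNReal.sum_lt_top.mpr fun n _ => ?_).ne
    exact ENNReal.rpow_lt_top_of_nonneg hr0'.le ENNReal.coe_ne_top
  by_cases hS0 : S = 0
  · rw [hS0, ENNReal.zero_rpow_of_pos (one_div_pos.mpr hr0')]
    exact zero_le
  -- the test sequence
  set T : ℝ≥0 := S.toNNReal with hTdef
  have hT : (T : ℝ≥0∞) = S := ENNReal.coe_toNNReal hS_top
  have hTpos : (0 : ℝ) < (T : ℝ) := by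
    have := ENNReal.toNNReal_pos hS0 hS_top
    exact_mod_cast this
  set x : ℕ → ℝ := fun j =>
    if j ∈ Finset.Ioc 0 N then ((‖z j‖₊ : ℝ)) ^ (r / p) / (T : ℝ) ^ (1 / p) else 0 with hxdef
  have hxofReal : ∀ k, k ∈ Finset.Ioc 0 N →
      ENNReal.ofReal |x k| = ((‖z k‖₊ : ℝ≥0∞)) ^ (r / p) / S ^ (1 / p) := by
    intro k hk
    have hnum : (0 : ℝ) ≤ ((‖z k‖₊ : ℝ)) ^ (r / p) := Real.rpow_nonneg (by positivity) _
    have hden : (0 : ℝ) < (T : ℝ) ^ (1 / p) := Real.rpow_pos_of_pos hTpos _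
    have hxk : x k = ((‖z k‖₊ : ℝ)) ^ (r / p) / (T : ℝ) ^ (1 / p) := by
      rw [hxdef]; exact if_pos hk
    rw [hxk, abs_of_nonneg (div_nonneg hnum hden.le), ENNReal.ofReal_div_of_pos hden,
      ← ENNReal.ofReal_rpow_of_nonneg (by positivity) (by positivity),
      ← ENNReal.ofReal_rpow_of_nonneg (by positivity) (by positivity),
      ENNReal.ofReal_coe_nnreal, ENNReal.ofReal_coe_nnreal, hT]
  have hxzero : ∀ k, k ∉ Finset.Ioc 0 N → ENNReal.ofReal |x k| = 0 := by
    intro k hk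
    have hxk : x k = 0 := by rw [hxdef]; exact if_neg hk
    rw [hxk, abs_zero, ENNReal.ofReal_zero]
  -- bound on the Tandori p-norm of x
  have hA : ∀ n : ℕ, (⨆ (k) (_ : n + 1 ≤ k), ENNReal.ofReal |x k|) ≤
      (csup z N n : ℝ≥0∞) ^ (r / p) / S ^ (1 / p) := by
    intro n
    refine iSup₂_le fun k hk => ?_
    by_cases hkN : k ≤ N
    · have hkmem : k ∈ Finset.Ioc 0 N := Finset.mem_Ioc.mpr ⟨by omega, hkN⟩
      rw [hxofReal k hkmem]
      refine ENNReal.div_le_div_right ?_ _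
      refine ENNReal.rpow_le_rpow ?_ (by positivity)
      have hle : ‖z k‖₊ ≤ csup z N n :=
        Finset.le_sup (f := fun j => ‖z j‖₊) (Finset.mem_Ioc.mpr ⟨by omega, hkN⟩)
      exact_mod_cast hle
    · rw [hxzero k (fun hmem => hkN (Finset.mem_Ioc.mp hmem).2)]
      exact zero_le
  have hx1 : tlNorm p x ≤ 1 := by
    have hterm : ∀ n : ℕ, (⨆ (k) (_ : n + 1 ≤ k), ENNReal.ofReal |x k|) ^ p ≤
        (csup z N n : ℝ≥0∞) ^ r / S := by
      intro n
      calc (⨆ (k) (_ : n + 1 ≤ k), ENNReal.ofReal |x k|) ^ p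
          ≤ ((csup z N n : ℝ≥0∞) ^ (r / p) / S ^ (1 / p)) ^ p :=
            ENNReal.rpow_le_rpow (hA n) hp0'.le
        _ = (csup z N n : ℝ≥0∞) ^ r / S := by
            rw [ENNReal.div_rpow_of_nonneg _ _ hp0'.le, ← ENNReal.rpow_mul,
              ← ENNReal.rpow_mul, div_mul_cancel₀ r hp0'.ne', one_div_mul_cancel hp0'.ne',
              ENNReal.rpow_one]
    have hsum : (∑' n : ℕ, (⨆ (k) (_ : n + 1 ≤ k), ENNReal.ofReal |x k|) ^ p) ≤ 1 := by
      calc (∑' n : ℕ, (⨆ (k) (_ : n + 1 ≤ k), ENNReal.ofReal |x k|) ^ p)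
          ≤ ∑' n : ℕ, (csup z N n : ℝ≥0∞) ^ r / S :=
            Summable.tsum_le_tsum hterm ENNReal.summable ENNReal.summable
        _ = ∑ n ∈ Finset.range N, (csup z N n : ℝ≥0∞) ^ r / S := by
            refine tsum_eq_sum fun n hn => ?_
            have h0 : csup z N n = 0 := by
              rw [csup, Finset.Ioc_eq_empty (by simp at hn; omega)]; rfl
            rw [h0, ENNReal.coe_zero, ENNReal.zero_rpow_of_pos hr0', ENNReal.zero_div]
        _ ≤ 1 := by
            simp_rw [div_eq_mul_inv, ← Finset.sum_mul, ← hSdef]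
            rw [ENNReal.mul_inv_cancel hS0 hS_top]
    calc tlNorm p x
        = (∑' n : ℕ, (⨆ (k) (_ : n + 1 ≤ k), ENNReal.ofReal |x k|) ^ p) ^ (1 / p) := rfl
      _ ≤ (1 : ℝ≥0∞) ^ (1 / p) := ENNReal.rpow_le_rpow hsum (one_div_nonneg.mpr hp0'.le)
      _ = 1 := ENNReal.one_rpow _
  -- lower bound for the Tandori q-norm of z·x
  have hD : ∀ n ∈ Finset.range N,
      (csup z N n : ℝ≥0∞) ^ (r / q) / S ^ (1 / p) ≤
        ⨆ (k) (_ : n + 1 ≤ k), ENNReal.ofReal |z k * x k| := by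
    intro n hn
    have hnN : n < N := Finset.mem_range.mp hn
    obtain ⟨j, hj, hje⟩ := Finset.exists_mem_eq_sup (Finset.Ioc n N)
      ⟨n + 1, Finset.mem_Ioc.mpr ⟨Nat.lt_succ_self n, hnN⟩⟩ (fun j => ‖z j‖₊)
    obtain ⟨hj1, hj2⟩ := Finset.mem_Ioc.mp hj
    have hjmem : j ∈ Finset.Ioc 0 N := Finset.mem_Ioc.mpr ⟨by omega, hj2⟩
    by_cases hz0 : ‖z j‖₊ = 0
    · rw [csup, hje, hz0, ENNReal.coe_zero, ENNReal.zero_rpow_of_pos (by positivity),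
        ENNReal.zero_div]
      exact zero_le
    · have hcoe0 : ((‖z j‖₊ : ℝ≥0∞)) ≠ 0 := by exact_mod_cast hz0
      calc (csup z N n : ℝ≥0∞) ^ (r / q) / S ^ (1 / p)
          = (‖z j‖₊ : ℝ≥0∞) * ((‖z j‖₊ : ℝ≥0∞) ^ (r / p) / S ^ (1 / p)) := by
            rw [csup, hje, ← mul_div_assoc]
            congr 1
            rw [← idB hq hqp hrr, ENNReal.rpow_add 1 (r / p) hcoe0 ENNReal.coe_ne_top,
              ENNReal.rpow_one]
        _ = ENNReal.ofReal |z j * x j| := by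
            rw [abs_mul, ENNReal.ofReal_mul (abs_nonneg _), ofReal_abs, hxofReal j hjmem]
        _ ≤ ⨆ (k) (_ : n + 1 ≤ k), ENNReal.ofReal |z k * x k| :=
            le_iSup₂ (f := fun k (_ : n + 1 ≤ k) => ENNReal.ofReal |z k * x k|) j hj1
  have hlow : S ^ (1 / r) ≤ tlNorm q (fun n => z n * x n) := by
    have hsum2 : ∑ n ∈ Finset.range N,
        ((csup z N n : ℝ≥0∞) ^ (r / q) / S ^ (1 / p)) ^ q = S ^ (q / r) := by
      have hterm : ∀ n : ℕ, ((csup z N n : ℝ≥0∞) ^ (r / q) / S ^ (1 / p)) ^ q =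
          (csup z N n : ℝ≥0∞) ^ r / S ^ (q / p) := by
        intro n
        rw [ENNReal.div_rpow_of_nonneg _ _ hq0'.le, ← ENNReal.rpow_mul, ← ENNReal.rpow_mul,
          div_mul_cancel₀ r hq0'.ne']
        congr 1
        ring
      simp_rw [hterm, div_eq_mul_inv, ← Finset.sum_mul, ← hSdef]
      have h1 : S ^ (q / r) * S ^ (q / p) = S := by
        rw [← ENNReal.rpow_add _ _ hS0 hS_top, idF hq hqp hrr, ENNReal.rpow_one]
      have h2 : S ^ (q / p) ≠ 0 := (ENNReal.rpow_pos (by positivity) hS_top).ne'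
      have h3 : S ^ (q / p) ≠ ⊤ := ENNReal.rpow_ne_top_of_nonneg (by positivity) hS_top
      rw [← div_eq_mul_inv]
      exact ((ENNReal.eq_div_iff h2 h3).mpr (by rw [mul_comm]; exact h1)).symm
    have hsum3 : S ^ (q / r) ≤
        ∑' n : ℕ, (⨆ (k) (_ : n + 1 ≤ k), ENNReal.ofReal |z k * x k|) ^ q := by
      calc S ^ (q / r)
          = ∑ n ∈ Finset.range N,
              ((csup z N n : ℝ≥0∞) ^ (r / q) / S ^ (1 / p)) ^ q := hsum2.symm
        _ ≤ ∑ n ∈ Finset.range N,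
              (⨆ (k) (_ : n + 1 ≤ k), ENNReal.ofReal |z k * x k|) ^ q :=
            Finset.sum_le_sum fun n hn => ENNReal.rpow_le_rpow (hD n hn) hq0'.le
        _ ≤ _ := ENNReal.sum_le_tsum _
    calc S ^ (1 / r) = (S ^ (q / r)) ^ (1 / q) := by
          rw [← ENNReal.rpow_mul]
          congr 1
          field_simp
      _ ≤ (∑' n : ℕ, (⨆ (k) (_ : n + 1 ≤ k), ENNReal.ofReal |z k * x k|) ^ q) ^ (1 / q) :=
          ENNReal.rpow_le_rpow hsum3 (one_div_nonneg.mpr hq0'.le)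
      _ = tlNorm q (fun n => z n * x n) := rfl
  exact le_iSup₂_of_le x hx1 hlow

lemma lower {p q r : ℝ} (hq : 1 < q) (hqp : q < p) (hrr : 1 / r = 1 / q - 1 / p)
    (z : ℕ → ℝ) :
    tlNorm r z ≤ ⨆ (x : ℕ → ℝ) (_ : tlNorm p x ≤ 1), tlNorm q (fun n => z n * x n) := by
  have hr0' := hr0 hq hqp hrr
  refine le_of_forall_lt fun t ht => ?_
  have ht' : t ^ r < ∑' n : ℕ, (⨆ (k) (_ : n + 1 ≤ k), ENNReal.ofReal |z k|) ^ r := by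
    have h := ENNReal.rpow_lt_rpow ht hr0'
    rwa [tlNorm, ← ENNReal.rpow_mul, one_div_mul_cancel hr0'.ne', ENNReal.rpow_one] at h
  rw [ENNReal.tsum_eq_iSup_nat, lt_iSup_iff] at ht'
  obtain ⟨K, hK⟩ := ht'
  have hb : ∀ n : ℕ, (⨆ (k) (_ : n + 1 ≤ k), ENNReal.ofReal |z k|) ^ r =
      ⨆ N, (csup z N n : ℝ≥0∞) ^ r := by
    intro n
    rw [bsup_eq, iSup_rpow hr0']
  simp_rw [hb] at hK
  rw [ENNReal.finsetSum_iSup_of_monotone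
    (fun n => fun N M h => ENNReal.rpow_le_rpow
      (ENNReal.coe_le_coe.mpr (csup_mono z n h)) hr0'.le), lt_iSup_iff] at hK
  obtain ⟨N, hN⟩ := hK
  set M := max N K with hMdef
  have hMN : (∑ n ∈ Finset.range K, (csup z N n : ℝ≥0∞) ^ r) ≤
      ∑ n ∈ Finset.range M, (csup z M n : ℝ≥0∞) ^ r := by
    refine le_trans (Finset.sum_le_sum fun n _ => ENNReal.rpow_le_rpow
      (ENNReal.coe_le_coe.mpr (csup_mono z n (le_max_left N K))) hr0'.le) ?_
    exact Finset.sum_le_sum_of_subset (Finset.range_subset_range.mpr (le_max_right N K))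
  have hlt : t ^ r < ∑ n ∈ Finset.range M, (csup z M n : ℝ≥0∞) ^ r := lt_of_lt_of_le hN hMN
  have ht2 : t < (∑ n ∈ Finset.range M, (csup z M n : ℝ≥0∞) ^ r) ^ (1 / r) := by
    have h := ENNReal.rpow_lt_rpow hlt (one_div_pos.mpr hr0')
    rwa [← ENNReal.rpow_mul, mul_one_div_cancel hr0'.ne', ENNReal.rpow_one] at h
  exact lt_of_lt_of_le ht2 (lower_step hq hqp hrr z M)

end Stmt16

/-- The identification `M(τℓ_p, τℓ_q) = τℓ_r` for `1 < q < p < ∞`,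
`1/r = 1/q − 1/p` (Bennett; Grosse-Erdmann). -/
theorem stmt_16 (p q r : ℝ) (hq : 1 < q) (hqp : q < p) (hr : 1 / r = 1 / q - 1 / p) :
    ∃ c C : ℝ, 0 < c ∧ 0 < C ∧ ∀ z : ℕ → ℝ,
      ENNReal.ofReal c * tlNorm r z ≤
          (⨆ (x : ℕ → ℝ) (_ : tlNorm p x ≤ 1), tlNorm q (fun n => z n * x n)) ∧
        (⨆ (x : ℕ → ℝ) (_ : tlNorm p x ≤ 1), tlNorm q (fun n => z n * x n)) ≤
          ENNReal.ofReal C * tlNorm r z := by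
  refine ⟨1, 1, one_pos, one_pos, fun z => ⟨?_, ?_⟩⟩
  · rw [ENNReal.ofReal_one, one_mul]
    exact Stmt16.lower hq hqp hr z
  · rw [ENNReal.ofReal_one, one_mul]
    refine iSup₂_le fun x hx => ?_
    calc tlNorm q (fun n => z n * x n) ≤ tlNorm r z * tlNorm p x :=
          Stmt16.upper hq hqp hr z x
      _ ≤ tlNorm r z * 1 := mul_le_mul_right hx _
      _ = tlNorm r z := mul_one _
end

section
/- Let 0 < p, q < ∞ and let r satisfy 1/r = 1/p + 1/q. There exists a constant C ≥ 1, depending only on p and q, such that: (a) for all real sequences y, z one has ‖y·z‖_{τℓ_r} ≤ C · ‖y‖_{τℓ_p} · ‖z‖_{τℓ_q}; and (b) every real sequence x with ‖x‖_{τℓ_r} < ∞ can be written as a coordinatewise product x = y·z of two sequences with ‖y‖_{τℓ_p} · ‖z‖_{τℓ_q} ≤ C · ‖x‖_{τℓ_r}. -/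
open ENNReal

private lemma iSup_rpow_aux {u : ℕ → ℝ≥0∞} {n : ℕ} {a : ℝ} (ha : 0 < a) :
    (⨆ (k : ℕ) (_ : n + 1 ≤ k), u k ^ a) = (⨆ (k : ℕ) (_ : n + 1 ≤ k), u k) ^ a := by
  have h1 := (ENNReal.orderIsoRpow a ha).map_iSup (fun k => ⨆ (_ : n + 1 ≤ k), u k)
  simp only [ENNReal.orderIsoRpow_apply] at h1
  rw [h1]
  congr 1
  ext k
  have h2 := (ENNReal.orderIsoRpow a ha).map_iSup (fun _ : n + 1 ≤ k => u k)
  simp only [ENNReal.orderIsoRpow_apply] at h2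
  exact h2.symm

/-- Bennett's product formula `τℓ_p ⊙ τℓ_q = τℓ_r`, where `1/r = 1/p + 1/q`. -/
theorem stmt_17 (p q r : ℝ) (hp : 0 < p) (hq : 0 < q) (hr : 1 / r = 1 / p + 1 / q) :
    ∃ C : ℝ, 1 ≤ C ∧
      (∀ y z : ℕ → ℝ,
        tlNorm r (fun n => y n * z n) ≤ ENNReal.ofReal C * (tlNorm p y * tlNorm q z)) ∧
      (∀ x : ℕ → ℝ, tlNorm r x < ⊤ →
        ∃ y z : ℕ → ℝ, (∀ n, x n = y n * z n) ∧
          tlNorm p y * tlNorm q z ≤ ENNReal.ofReal C * tlNorm r x) := by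
  have hr0 : 0 < r := by
    have h1 : 0 < 1 / r := by rw [hr]; positivity
    exact one_div_pos.mp h1
  have hrp : r < p := by
    have h1 : 1 / p < 1 / r := by rw [hr]; linarith [one_div_pos.mpr hq]
    exact lt_of_one_div_lt_one_div hp h1
  have hsum : r / p + r / q = 1 := by
    have h1 : r / p + r / q = r * (1 / p + 1 / q) := by ring
    rw [h1, ← hr]
    field_simp
  have hconj : (p / r).HolderConjugate (q / r) := by
    rw [Real.holderConjugate_iff]; constructor
    · exact (one_lt_div hr0).mpr hrp
    · rw [inv_div, inv_div]; exact hsum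
  refine ⟨1, le_refl 1, ?_, ?_⟩
  · -- part (a)
    intro y z
    set U : ℕ → ℝ≥0∞ := fun n => ⨆ (k : ℕ) (_ : n + 1 ≤ k), ENNReal.ofReal |y k| with hU
    set V : ℕ → ℝ≥0∞ := fun n => ⨆ (k : ℕ) (_ : n + 1 ≤ k), ENNReal.ofReal |z k| with hV
    have hUV : ∀ n : ℕ, (⨆ (k : ℕ) (_ : n + 1 ≤ k), ENNReal.ofReal |y k * z k|)
        ≤ U n * V n := by
      intro n
      refine iSup₂_le fun k hk => ?_
      rw [abs_mul, ENNReal.ofReal_mul (abs_nonneg _)]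
      exact mul_le_mul'
        (le_iSup₂ (f := fun k (_ : n + 1 ≤ k) => ENNReal.ofReal |y k|) k hk)
        (le_iSup₂ (f := fun k (_ : n + 1 ≤ k) => ENNReal.ofReal |z k|) k hk)
    have holder : ∑' n : ℕ, (U n * V n) ^ r
        ≤ (∑' n : ℕ, U n ^ p) ^ (r / p) * (∑' n : ℕ, V n ^ q) ^ (r / q) := by
      have h := ENNReal.lintegral_mul_le_Lp_mul_Lq (MeasureTheory.Measure.count (α := ℕ))
        hconj (f := fun n => U n ^ r) (g := fun n => V n ^ r)
        (measurable_from_top.aemeasurable) (measurable_from_top.aemeasurable)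
      simp only [Pi.mul_apply, MeasureTheory.lintegral_count] at h
      calc ∑' n : ℕ, (U n * V n) ^ r = ∑' n : ℕ, U n ^ r * V n ^ r := by
            simp only [ENNReal.mul_rpow_of_nonneg _ _ hr0.le]
        _ ≤ (∑' n : ℕ, (U n ^ r) ^ (p / r)) ^ (1 / (p / r))
            * (∑' n : ℕ, (V n ^ r) ^ (q / r)) ^ (1 / (q / r)) := h
        _ = (∑' n : ℕ, U n ^ p) ^ (r / p) * (∑' n : ℕ, V n ^ q) ^ (r / q) := by
            simp only [← ENNReal.rpow_mul, one_div_div]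
            rw [mul_div_cancel₀ _ hr0.ne', mul_div_cancel₀ _ hr0.ne']
    rw [ENNReal.ofReal_one, one_mul]
    have step1 : tlNorm r (fun n => y n * z n) ≤ (∑' n : ℕ, (U n * V n) ^ r) ^ (1 / r) := by
      apply ENNReal.rpow_le_rpow _ (by positivity)
      exact ENNReal.tsum_le_tsum fun n => ENNReal.rpow_le_rpow (hUV n) hr0.le
    refine step1.trans ?_
    refine (ENNReal.rpow_le_rpow holder (by positivity)).trans ?_
    rw [ENNReal.mul_rpow_of_nonneg _ _ (by positivity), ← ENNReal.rpow_mul, ← ENNReal.rpow_mul]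
    have e1 : r / p * (1 / r) = 1 / p := by field_simp
    have e2 : r / q * (1 / r) = 1 / q := by field_simp
    rw [e1, e2]
    rfl
  · -- part (b)
    intro x _
    set u : ℕ → ℝ≥0∞ := fun n => ⨆ (k : ℕ) (_ : n + 1 ≤ k), ENNReal.ofReal |x k| with hu
    set A := ∑' n : ℕ, u n ^ r with hA
    refine ⟨fun n => (if x n < 0 then (-1 : ℝ) else 1) * |x n| ^ (r / p),
      fun n => |x n| ^ (r / q), ?_, ?_⟩
    · intro n
      have h1 : |x n| ^ (r / p) * |x n| ^ (r / q) = |x n| := by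
        rw [← Real.rpow_add' (abs_nonneg _) (by rw [hsum]; norm_num), hsum, Real.rpow_one]
      rw [mul_assoc, h1]
      split
      · next h => rw [abs_of_neg h]; ring
      · next h => rw [abs_of_nonneg (not_lt.mp h)]; ring
    · have habs : ∀ k, |(if x k < 0 then (-1 : ℝ) else 1) * |x k| ^ (r / p)|
          = |x k| ^ (r / p) := by
        intro k
        rw [abs_mul]
        have : |(|x k|) ^ (r / p)| = |x k| ^ (r / p) :=
          abs_of_nonneg (Real.rpow_nonneg (abs_nonneg _) _)
        split <;> simp [this]
      have key : ∀ (s : ℝ) (hs : 0 < s) (w : ℕ → ℝ) (hw : ∀ k, |w k| = |x k| ^ (r / s)),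
          tlNorm s w = A ^ (1 / s) := by
        intro s hs w hw
        unfold tlNorm
        congr 1
        · apply tsum_congr
          intro n
          have hn : (⨆ (k : ℕ) (_ : n + 1 ≤ k), ENNReal.ofReal |w k|) = u n ^ (r / s) := by
            rw [hu]
            rw [← iSup_rpow_aux (div_pos hr0 hs)]
            congr 1; ext k; congr 1; ext hk
            rw [hw k, ENNReal.ofReal_rpow_of_nonneg (abs_nonneg _) (div_pos hr0 hs).le]
          rw [hn, ← ENNReal.rpow_mul, div_mul_cancel₀ _ hs.ne']
      rw [key p hp _ habs, key q hq _ (fun k => abs_of_nonneg (Real.rpow_nonneg (abs_nonneg _) _)),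
        ← ENNReal.rpow_add_of_nonneg _ _ (by positivity) (by positivity), ← hr,
        ENNReal.ofReal_one, one_mul]
      exact le_refl _
end

section
/- Let 0 < p, q < ∞ and let r satisfy 1/r = 1/p + 1/q. There exists a constant C ≥ 1, depending only on p and q, such that: (a) for all Lebesgue-measurable g, h : (0,∞) → ℝ one has ‖g·h‖_{τL_r} ≤ C · ‖g‖_{τL_p} · ‖h‖_{τL_q}; and (b) every Lebesgue-measurable f : (0,∞) → ℝ with ‖f‖_{τL_r} < ∞ can be written as f = g·h almost everywhere, with g, h Lebesgue-measurable and ‖g‖_{τL_p} · ‖h‖_{τL_q} ≤ C · ‖f‖_{τL_r}. -/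
open ENNReal MeasureTheory

lemma S_antitone (f : ℝ → ℝ) :
    Antitone (fun x => essSup (fun t => ENNReal.ofReal |f t|) (volume.restrict (Set.Ici x))) := by
  intro x y hxy
  exact essSup_mono_measure' (Measure.restrict_mono (Set.Ici_subset_Ici.2 hxy) le_rfl)

lemma essSup_rpow {α : Type*} {m : MeasurableSpace α} (u : α → ℝ≥0∞) (μ : Measure α)
    {c : ℝ} (hc : 0 < c) : essSup (fun x => u x ^ c) μ = (essSup u μ) ^ c := by
  have := (ENNReal.orderIsoRpow c hc).essSup_apply u μ
  simpa [ENNReal.orderIsoRpow_apply] using this.symm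


/-- The product formula `τL_p ⊙ τL_q = τL_r`, where `1/r = 1/p + 1/q`. -/
theorem stmt_18 (p q r : ℝ) (hp : 0 < p) (hq : 0 < q) (hr : 1 / r = 1 / p + 1 / q) :
    ∃ C : ℝ, 1 ≤ C ∧
      (∀ g h : ℝ → ℝ, Measurable g → Measurable h →
        TLNorm r (fun t => g t * h t) ≤ ENNReal.ofReal C * (TLNorm p g * TLNorm q h)) ∧
      (∀ f : ℝ → ℝ, Measurable f → TLNorm r f < ⊤ →
        ∃ g h : ℝ → ℝ, Measurable g ∧ Measurable h ∧
          (∀ᵐ t ∂(volume.restrict (Set.Ioi (0 : ℝ))), f t = g t * h t) ∧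
          TLNorm p g * TLNorm q h ≤ ENNReal.ofReal C * TLNorm r f) := by
  have hr0 : 0 < 1 / r := by rw [hr]; positivity
  have hrpos : 0 < r := one_div_pos.mp hr0
  have hsum : r / p + r / q = 1 := by
    calc r / p + r / q = r * (1 / p + 1 / q) := by ring
      _ = r * (1 / r) := by rw [← hr]
      _ = 1 := by field_simp
  refine ⟨1, le_refl 1, ?_, ?_⟩
  · -- part (a)
    intro g h hg hh
    rw [ENNReal.ofReal_one, one_mul]
    set Sg := fun x => essSup (fun t => ENNReal.ofReal |g t|) (volume.restrict (Set.Ici x)) with hSg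
    set Sh := fun x => essSup (fun t => ENNReal.ofReal |h t|) (volume.restrict (Set.Ici x)) with hSh
    have hconj : (p / r).HolderConjugate (q / r) := by
      refine (fun (h1 : 1 < p / r) (h2 : (p / r)⁻¹ + (q / r)⁻¹ = 1) => (⟨by rw [inv_one]; exact h2, by linarith, by positivity⟩ : (p / r).HolderConjugate (q / r))) ?_ ?_
      · have hq' : 0 < r / q := by positivity
        have h1 : r / p < 1 := by linarith
        have h2 : r < p := (div_lt_one hp).mp h1
        rw [lt_div_iff₀ hrpos]; linarith
      · rw [inv_div, inv_div]; exact hsum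
    have step1 : ∀ x : ℝ,
        essSup (fun t => ENNReal.ofReal |g t * h t|) (volume.restrict (Set.Ici x)) ≤
          Sg x * Sh x := by
      intro x
      have : (fun t => ENNReal.ofReal |g t * h t|) =
          (fun t => ENNReal.ofReal |g t|) * (fun t => ENNReal.ofReal |h t|) := by
        funext t
        simp [abs_mul, ENNReal.ofReal_mul (abs_nonneg _)]
      rw [this]
      exact ENNReal.essSup_mul_le _ _
    have hSgm : Measurable Sg := (S_antitone g).measurable
    have hShm : Measurable Sh := (S_antitone h).measurable
    have holder :
        (∫⁻ x in Set.Ioi (0:ℝ), (Sg x ^ r) * (Sh x ^ r)) ≤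
          (∫⁻ x in Set.Ioi (0:ℝ), Sg x ^ p) ^ (r / p) *
            (∫⁻ x in Set.Ioi (0:ℝ), Sh x ^ q) ^ (r / q) := by
      have := ENNReal.lintegral_mul_le_Lp_mul_Lq (volume.restrict (Set.Ioi (0:ℝ))) hconj
        (f := fun x => Sg x ^ r) (g := fun x => Sh x ^ r)
        ((hSgm.pow_const r).aemeasurable) ((hShm.pow_const r).aemeasurable)
      simp only [Pi.mul_apply] at this
      have e1 : ∀ x, (Sg x ^ r) ^ (p / r) = Sg x ^ p := by
        intro x; rw [← ENNReal.rpow_mul]; congr 1; field_simp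
      have e2 : ∀ x, (Sh x ^ r) ^ (q / r) = Sh x ^ q := by
        intro x; rw [← ENNReal.rpow_mul]; congr 1; field_simp
      have e3 : 1 / (p / r) = r / p := one_div_div _ _
      have e4 : 1 / (q / r) = r / q := one_div_div _ _
      simpa [e3, e4] using (this.trans_eq (by simp [e1, e2]))
    unfold TLNorm
    calc (∫⁻ x in Set.Ioi (0:ℝ),
          (essSup (fun t => ENNReal.ofReal |g t * h t|) (volume.restrict (Set.Ici x))) ^ r) ^ (1/r)
        ≤ (∫⁻ x in Set.Ioi (0:ℝ), (Sg x ^ r) * (Sh x ^ r)) ^ (1/r) := by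
          apply ENNReal.rpow_le_rpow _ hr0.le
          apply lintegral_mono
          intro x
          calc (essSup (fun t => ENNReal.ofReal |g t * h t|) (volume.restrict (Set.Ici x))) ^ r
              ≤ (Sg x * Sh x) ^ r := ENNReal.rpow_le_rpow (step1 x) hrpos.le
            _ = Sg x ^ r * Sh x ^ r := ENNReal.mul_rpow_of_nonneg _ _ hrpos.le
      _ ≤ ((∫⁻ x in Set.Ioi (0:ℝ), Sg x ^ p) ^ (r / p) *
            (∫⁻ x in Set.Ioi (0:ℝ), Sh x ^ q) ^ (r / q)) ^ (1/r) :=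
          ENNReal.rpow_le_rpow holder hr0.le
      _ = (∫⁻ x in Set.Ioi (0:ℝ), Sg x ^ p) ^ (1/p) *
            (∫⁻ x in Set.Ioi (0:ℝ), Sh x ^ q) ^ (1/q) := by
          rw [ENNReal.mul_rpow_of_nonneg _ _ hr0.le, ← ENNReal.rpow_mul, ← ENNReal.rpow_mul]
          congr 1 <;> congr 1 <;> field_simp <;> ring
  · -- part (b)
    intro f hf hfin
    have hc1 : 0 < r / p := by positivity
    have hc2 : 0 < r / q := by positivity
    set g : ℝ → ℝ := fun t => |f t| ^ (r / p - 1) * f t with hgdef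
    set h : ℝ → ℝ := fun t => |f t| ^ (r / q) with hhdef
    refine ⟨g, h, (hf.abs.pow_const _).mul hf, hf.abs.pow_const _, ?_, ?_⟩
    · filter_upwards with t
      by_cases hft : f t = 0
      · simp [hgdef, hhdef, hft]
      · have habs : (0:ℝ) < |f t| := abs_pos.mpr hft
        have : g t * h t = f t * (|f t| ^ (r / p - 1) * |f t| ^ (r / q)) := by
          simp only [hgdef, hhdef]; ring
        rw [this, ← Real.rpow_add habs]
        have : r / p - 1 + r / q = 0 := by linarith [hsum]
        rw [this, Real.rpow_zero, mul_one]
    · rw [ENNReal.ofReal_one, one_mul]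
      have habsg : ∀ t, ENNReal.ofReal |g t| = (ENNReal.ofReal |f t|) ^ (r / p) := by
        intro t
        by_cases hft : f t = 0
        · simp [hgdef, hft, ENNReal.zero_rpow_of_pos hc1]
        · have habs : (0:ℝ) < |f t| := abs_pos.mpr hft
          have : |g t| = |f t| ^ (r / p) := by
            rw [hgdef]
            simp only [abs_mul, abs_of_nonneg (Real.rpow_nonneg (abs_nonneg (f t)) _)]
            nth_rewrite 2 [show |f t| = |f t| ^ (1:ℝ) from (Real.rpow_one _).symm]
            rw [← Real.rpow_add habs]; ring_nf
          rw [this, ENNReal.ofReal_rpow_of_nonneg (abs_nonneg _) hc1.le]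
      have habsh : ∀ t, ENNReal.ofReal |h t| = (ENNReal.ofReal |f t|) ^ (r / q) := by
        intro t
        rw [hhdef]
        simp only [abs_of_nonneg (Real.rpow_nonneg (abs_nonneg (f t)) _)]
        rw [ENNReal.ofReal_rpow_of_nonneg (abs_nonneg _) hc2.le]
      set Sf := fun x => essSup (fun t => ENNReal.ofReal |f t|) (volume.restrict (Set.Ici x)) with hSf
      have eg : ∀ x : ℝ, essSup (fun t => ENNReal.ofReal |g t|) (volume.restrict (Set.Ici x))
          = Sf x ^ (r / p) := by
        intro x
        simp only [habsg]
        exact essSup_rpow _ _ hc1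
      have eh : ∀ x : ℝ, essSup (fun t => ENNReal.ofReal |h t|) (volume.restrict (Set.Ici x))
          = Sf x ^ (r / q) := by
        intro x
        simp only [habsh]
        exact essSup_rpow _ _ hc2
      set A := ∫⁻ x in Set.Ioi (0:ℝ), Sf x ^ r with hA
      have hTg : TLNorm p g = A ^ (1/p) := by
        unfold TLNorm
        congr 1
        apply lintegral_congr
        intro x
        rw [eg x, ← ENNReal.rpow_mul]
        congr 1; field_simp
      have hTh : TLNorm q h = A ^ (1/q) := by
        unfold TLNorm
        congr 1
        apply lintegral_congr
        intro x
        rw [eh x, ← ENNReal.rpow_mul]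
        congr 1; field_simp
      have hTf : TLNorm r f = A ^ (1/r) := rfl
      rw [hTg, hTh, hTf]
      by_cases hA0 : A = 0
      · rw [hA0, ENNReal.zero_rpow_of_pos (one_div_pos.mpr hp),
          ENNReal.zero_rpow_of_pos (one_div_pos.mpr hq), zero_mul]
        exact zero_le
      · have hAtop : A ≠ ⊤ := by
          intro htop
          rw [hTf, htop, ENNReal.top_rpow_of_pos hr0] at hfin
          exact (lt_irrefl _ hfin)
        rw [← ENNReal.rpow_add _ _ hA0 hAtop, ← hr]
end
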